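/- arXiv:2010.08787 — 3 statements merged into one kernel-verified Lean document; each statement's English description precedes it below -/
import Mathlib

section
/- Let D_n ∈ C_n be a configuration containing at least one atom with second coordinate strictly greater than e_S. Let h := max{x₂ : (x₁, x₂) ∈ D_n} (so h > e_S), let L := ℝ × {h} be the topmost occupied horizontal line, and let ℓ := #(D_n ∩ L). Then V_n(D_n) ≥ V_{n−ℓ}(D_n \ L) − 6c_F(ℓ − 1) − 4c_F, where V_{n−ℓ} denotes the same energy functional applied to the configuration D_n \ L with n − ℓ atoms. -/
open scoped BigOperators Classical Topology ENNReal
open Filter MeasureTheory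

noncomputable section

/-!
Common setting: film lattice `L_F` with parameter `e_F = 1`, substrate spacing
`e_S = q/p` (`p, q` coprime positive integers), Heitmann–Radin potentials and the
configurational energy `V_n` (with values in `EReal`, since the Heitmann–Radin
potential takes the value `+∞` below distance `1`).
-/

/-- Points of the plane. -/
abbrev Pt : Type := ℝ × ℝ

/-- The lattice vector `t₁ = (1,0)`. -/
def t1 : Pt := ((1 : ℝ), (0 : ℝ))

/-- The lattice vector `t₂ = (1/2, √3/2)`. -/
def t2 : Pt := ((1 / 2 : ℝ), Real.sqrt 3 / 2)

/-- Euclidean distance on `ℝ × ℝ`. -/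
def dE (x y : Pt) : ℝ := Real.sqrt ((x.1 - y.1) ^ 2 + (x.2 - y.2) ^ 2)

/-- Substrate lattice spacing `e_S = q / p`. -/
def eS (p q : ℕ) : ℝ := (q : ℝ) / (p : ℝ)

/-- The film lattice `L_F = {(0, e_S) + k₁ t₁ + k₂ t₂ : k₁ ∈ ℤ, k₂ ∈ ℕ ∪ {0}}`. -/
def LF (p q : ℕ) : Set Pt :=
  {x | ∃ (k₁ : ℤ) (k₂ : ℕ), x = (((0 : ℝ), eS p q) : Pt) + (k₁ : ℝ) • t1 + (k₂ : ℝ) • t2}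

/-- The set `∂L_{FS} = {(k q, e_S) : k ∈ ℤ}` of lower-boundary film sites lying at
distance `e_S` above a substrate atom. -/
def bLFS (p q : ℕ) : Set Pt := {x | ∃ k : ℤ, x = (((k : ℝ) * (q : ℝ), eS p q) : Pt)}

/-- Crystalline configurations with `n` atoms: subsets of `L_F` of cardinality `n`. -/
def Cn (p q n : ℕ) : Set (Finset Pt) := {D | ↑D ⊆ LF p q ∧ D.card = n}

/-- The Heitmann–Radin sticky-disc potential: `+∞` for `r < 1`, `-c_F` at `r = 1`,
`0` for `r > 1`. -/
def vF (cF : ℝ) (r : ℝ) : EReal :=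
  if r < 1 then (⊤ : EReal) else if r = 1 then ((-cF : ℝ) : EReal) else (0 : EReal)

/-- The one-body substrate potential `v¹`: `-c_S` on `∂L_{FS}`, `0` otherwise. -/
def v1 (cS : ℝ) (p q : ℕ) (x : Pt) : ℝ := if x ∈ bLFS p q then -cS else 0

/-- The total energy `V_n(D) = Σ_{(x,y) ∈ D×D, x ≠ y} v_F(|x-y|) + Σ_{x ∈ D} v¹(x)`. -/
def Vn (cF cS : ℝ) (p q : ℕ) (D : Finset Pt) : EReal :=
  (∑ e ∈ D.offDiag, vF cF (dE e.1 e.2)) + (((∑ x ∈ D, v1 cS p q x) : ℝ) : EReal)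

/-- The dewetting condition: `c_S < 4c_F` if `q = 1` and `c_S < 6c_F` if `q ≠ 1`. -/
def Dewetting (cF cS : ℝ) (q : ℕ) : Prop := if q = 1 then cS < 4 * cF else cS < 6 * cF

/-- The boundary `∂D` of a configuration: atoms with fewer than `6` film neighbours. -/
def bdry (D : Finset Pt) : Finset Pt :=
  D.filter fun x => (D.filter fun y => dE x y = 1).card < 6

/-- The empirical measure `μ_{D_n} = (1/n) Σ_{x ∈ D_n} δ_{x/√n}`. -/
def emp (n : ℕ) (D : Finset Pt) : Measure Pt :=
  ((n : ℝ≥0∞))⁻¹ • ∑ x ∈ D, Measure.dirac (((Real.sqrt n)⁻¹ : ℝ) • x)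

/-- A configuration of `n` consecutive sites `{w, w + t₁, …, w + (n-1) t₁}` on `∂L_{FS}`. -/
def IsConsecutive (p q n : ℕ) (Dw : Finset Pt) : Prop :=
  ∃ w : Pt, w ∈ bLFS p q ∧ Dw = (Finset.range n).image fun i => w + (i : ℝ) • t1

/-- Two atoms joined by a chain of atoms of `D` with consecutive distances `1`. -/
def chainConn (D : Finset Pt) (x y : Pt) : Prop :=
  Relation.ReflTransGen (fun a b => a ∈ D ∧ b ∈ D ∧ dE a b = 1) x y

/-- Connectedness of a configuration. -/
def IsConnectedConf (D : Finset Pt) : Prop := ∀ x ∈ D, ∀ y ∈ D, chainConn D x y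

/-- `C` is a connected component of `D` (the set of atoms of `D` chain-connected to
some atom of `D`). -/
def IsComponent (D C : Finset Pt) : Prop :=
  ∃ x ∈ D, ∀ y : Pt, y ∈ C ↔ y ∈ D ∧ chainConn D x y

/-- Almost-connectedness: connected if `q = 1`; if `q ≠ 1`, the connected components
can be enumerated so that each one is at distance at most `q` from the union of the
previous ones. -/
def AlmostConnected (q : ℕ) (D : Finset Pt) : Prop :=
  if q = 1 then IsConnectedConf D
  else
    ∃ (k : ℕ) (f : Fin k → Finset Pt),
      Function.Injective f ∧
      (∀ i, IsComponent D (f i)) ∧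
      (∀ C : Finset Pt, IsComponent D C → ∃ i, C = f i) ∧
      (∀ i : Fin k, 1 ≤ (i : ℕ) →
        ∃ x ∈ f i, ∃ j : Fin k, j < i ∧ ∃ y ∈ f j, dE x y ≤ (q : ℝ))

/-- Local energy `E_loc(x)` of a site with respect to the configuration `D`. -/
def Eloc (cF : ℝ) (D : Finset Pt) (x : Pt) : ℝ :=
  if x ∈ D then cF * (6 - ((D.filter fun y => dE x y = 1).card : ℝ)) else 0

/-- Height `y_M` of the topmost atom of `D` in the column of `x`. -/
def yM (D : Finset Pt) (x : Pt) : ℝ := sSup {y : ℝ | ((x.1, y) : Pt) ∈ D}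

/-- The strip top `x̃ = (x¹, y_M)`. -/
def til (D : Finset Pt) (x : Pt) : Pt := (x.1, yM D x)

/-- The weight `w₊(x̃)`. -/
def wPlus (p q : ℕ) (D : Finset Pt) (x : Pt) : ℝ :=
  if x + t1 ∈ D ∧ x + t1 ∈ bLFS p q ∧ til D x + t2 = til D (x + t1) + t2 - t1 then 1 / 2 else 1

/-- The weight `w₋(x̃)`. -/
def wMinus (p q : ℕ) (D : Finset Pt) (x : Pt) : ℝ :=
  if x - t1 ∈ D ∧ x - t1 ∈ bLFS p q ∧ til D x + t2 - t1 = til D (x - t1) + t2 then 1 / 2 else 1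

/-- Lower strip energy `E_strip,below(x)`. -/
def EStripBelow (cF cS : ℝ) (p q : ℕ) (D : Finset Pt) (x : Pt) : ℝ :=
  if q = 1 then
    (1 / 2) * Eloc cF D x + (1 / 4) * Eloc cF D (x + t1) + (1 / 4) * Eloc cF D (x - t1) - cS
  else
    Eloc cF D x + (1 / 2) * Eloc cF D (x + t1) + (1 / 2) * Eloc cF D (x - t1) - cS

/-- Upper strip energy `E_strip,above(x)`. -/
def EStripAbove (cF : ℝ) (p q : ℕ) (D : Finset Pt) (x : Pt) : ℝ :=
  (if til D x ≠ x then Eloc cF D (til D x) else 0) +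
    wPlus p q D x * Eloc cF D (til D x + t2) +
    wMinus p q D x * Eloc cF D (til D x + t2 - t1)

/-- The strip energy `E_strip(x) = E_strip,below(x) + E_strip,above(x)`. -/
def EStrip (cF cS : ℝ) (p q : ℕ) (D : Finset Pt) (x : Pt) : ℝ :=
  EStripBelow cF cS p q D x + EStripAbove cF p q D x

/-- `Δ_strip`: `4c_F - c_S` if `q = 1`, `6c_F - c_S` if `q ≠ 1`. -/
def DeltaStrip (cF cS : ℝ) (q : ℕ) : ℝ := if q = 1 then 4 * cF - cS else 6 * cF - cS

/-- The union `S(∂L_{FS})` of all strips of the configuration `D`. -/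
def SLFS (p q : ℕ) (D : Finset Pt) : Finset Pt :=
  D.filter fun y => ∃ x, x ∈ D ∧ x ∈ bLFS p q ∧
    (y = x ∨ y = x + t1 ∨ y = x - t1 ∨ y = til D x ∨ y = til D x + t2 ∨ y = til D x + t2 - t1)

/-- The rescaled energy `E_n(μ_{D_n}) = n^{-1/2} (V_n(D_n) + 6 c_F n)`. -/
def En (cF cS : ℝ) (p q n : ℕ) (D : Finset Pt) : EReal :=
  ((((Real.sqrt n)⁻¹ : ℝ)) : EReal) * (Vn cF cS p q D + ((6 * cF * (n : ℝ) : ℝ) : EReal))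

section Aux

open Finset

private lemma ereal_coe_sum {α : Type*} (s : Finset α) (f : α → ℝ) :
    ((∑ e ∈ s, f e : ℝ) : EReal) = ∑ e ∈ s, ((f e : ℝ) : EReal) :=
  map_sum (⟨⟨Real.toEReal, EReal.coe_zero⟩, EReal.coe_add⟩ : ℝ →+ EReal) f s

private lemma vF_ge (cF r : ℝ) : ((if r = 1 then -cF else 0 : ℝ) : EReal) ≤ vF cF r := by
  rcases lt_trichotomy r 1 with hr | hr | hr
  · simp [vF, hr, ne_of_lt hr]
  · simp [vF, hr]
  · simp [vF, not_lt.mpr hr.le, ne_of_gt hr]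

private lemma dE_comm (x y : Pt) : dE x y = dE y x := by
  unfold dE; congr 1; ring

private lemma lf_coords {p q : ℕ} {x : Pt} (hx : x ∈ LF p q) :
    ∃ (k₁ : ℤ) (k₂ : ℕ), x.1 = (k₁ : ℝ) + (k₂ : ℝ) / 2 ∧
      x.2 = eS p q + (k₂ : ℝ) * (Real.sqrt 3 / 2) := by
  obtain ⟨k₁, k₂, rfl⟩ := hx
  refine ⟨k₁, k₂, ?_, ?_⟩ <;>
    simp [t1, t2, Prod.fst_add, Prod.snd_add, Prod.smul_fst, Prod.smul_snd, smul_eq_mul] <;> ring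

private lemma same_line {x y : Pt} (h2 : x.2 = y.2) (hd : dE x y = 1) :
    y = x + t1 ∨ y = x - t1 := by
  have h1 : |x.1 - y.1| = 1 := by
    rw [dE, h2] at hd; simpa [Real.sqrt_sq_eq_abs] using hd
  rcases (abs_eq (by norm_num : (0:ℝ) ≤ 1)).mp h1 with hh | hh
  · right
    rw [Prod.ext_iff]
    constructor
    · simp [t1]; linarith
    · simp [t1]; linarith
  · left
    rw [Prod.ext_iff]
    constructor
    · simp [t1]; linarith
    · simp [t1]; linarith

private lemma below_neighbor {p q : ℕ} {x y : Pt} (hx : x ∈ LF p q) (hy : y ∈ LF p q)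
    (hlt : y.2 < x.2) (hd : dE x y = 1) : y = x - t2 ∨ y = x - t2 + t1 := by
  obtain ⟨k₁, k₂, hx1, hx2⟩ := lf_coords hx
  obtain ⟨m₁, m₂, hy1, hy2⟩ := lf_coords hy
  have hs3 : Real.sqrt 3 ^ 2 = 3 := Real.sq_sqrt (by norm_num)
  have hs3pos : 0 < Real.sqrt 3 := Real.sqrt_pos.mpr (by norm_num)
  have hA : (x.1 - y.1) ^ 2 + (x.2 - y.2) ^ 2 = 1 := by
    rw [dE] at hd
    exact Real.sqrt_eq_one.mp hd
  have hm : (m₂ : ℝ) < (k₂ : ℝ) := by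
    have h' : (m₂ : ℝ) * (Real.sqrt 3 / 2) < (k₂ : ℝ) * (Real.sqrt 3 / 2) := by
      rw [hx2, hy2] at hlt; linarith
    exact lt_of_mul_lt_mul_right h' (by positivity)
  have hm2 : m₂ < k₂ := by exact_mod_cast hm
  have hk : k₂ = m₂ + 1 := by
    by_contra hne
    have h2le : m₂ + 2 ≤ k₂ := by omega
    have hcast : (m₂ : ℝ) + 2 ≤ (k₂ : ℝ) := by exact_mod_cast h2le
    have hd2 : x.2 - y.2 = ((k₂ : ℝ) - (m₂ : ℝ)) * (Real.sqrt 3 / 2) := by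
      rw [hx2, hy2]; ring
    rw [hd2] at hA
    nlinarith [sq_nonneg (x.1 - y.1), sq_nonneg ((k₂ : ℝ) - (m₂ : ℝ) - 2)]
  have hd2 : x.2 - y.2 = Real.sqrt 3 / 2 := by
    rw [hx2, hy2, hk]; push_cast; ring
  have hx1' : (x.1 - y.1) ^ 2 = 1 / 4 := by
    rw [hd2] at hA; nlinarith
  have hc : x.1 - y.1 = ((k₁ : ℝ) - (m₁ : ℝ)) + 1 / 2 := by
    rw [hx1, hy1, hk]; push_cast; ring
  have hcc : ((k₁ : ℝ) - (m₁ : ℝ)) * (((k₁ : ℝ) - (m₁ : ℝ)) + 1) = 0 := by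
    rw [hc] at hx1'; linear_combination hx1'
  rcases mul_eq_zero.mp hcc with h0 | h0
  · left
    rw [Prod.ext_iff]
    constructor
    · simp [t2]; linarith
    · simp [t2]; linarith
  · right
    rw [Prod.ext_iff]
    constructor
    · simp [t1, t2]; linarith
    · simp [t1, t2]; linarith

end Aux
/-- removing the topmost occupied horizontal line `L` (at height
`h > e_S`, with `ℓ` atoms) decreases the energy by at most `6c_F(ℓ-1) + 4c_F`. -/
theorem remove_top_line
    (cF cS : ℝ) (hcF : 0 < cF) (hcS : 0 < cS)
    (p q : ℕ) (hp : 0 < p) (hq : 0 < q) (hpq : Nat.Coprime p q)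
    (n : ℕ) (D : Finset Pt) (hD : D ∈ Cn p q n)
    (hhigh : ∃ x ∈ D, eS p q < x.2)
    (h : ℝ) (hmem : ∃ x ∈ D, x.2 = h) (hub : ∀ x ∈ D, x.2 ≤ h) :
    Vn cF cS p q D ≥
      Vn cF cS p q (D.filter fun x => x.2 ≠ h) -
        (((6 * cF * ((((D.filter fun x => x.2 = h).card - 1 : ℕ)) : ℝ) + 4 * cF) : ℝ) : EReal) := by
  obtain ⟨hDsub, _hcard⟩ := hD
  set L : Finset Pt := D.filter (fun x => x.2 = h) with hLdef
  set D' : Finset Pt := D.filter (fun x => x.2 ≠ h) with hD'def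
  set ℓ : ℕ := L.card with hldef
  have hLn : L.Nonempty := by
    obtain ⟨x, hx, hxh⟩ := hmem
    exact ⟨x, Finset.mem_filter.mpr ⟨hx, hxh⟩⟩
  have hl1 : 1 ≤ ℓ := Finset.card_pos.mpr hLn
  have heSh : eS p q < h := by
    obtain ⟨z, hz, hz2⟩ := hhigh
    exact lt_of_lt_of_le hz2 (hub z hz)
  have hsub' : D' ⊆ D := Finset.filter_subset _ _
  have hod : D'.offDiag ⊆ D.offDiag := Finset.offDiag_mono hsub'
  set P : Finset (Pt × Pt) := D.offDiag \ D'.offDiag with hPdef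
  have hPmem : ∀ e ∈ P, e.1 ∈ D ∧ e.2 ∈ D ∧ e.1 ≠ e.2 ∧ (e.1.2 = h ∨ e.2.2 = h) := by
    intro e he
    rw [hPdef, Finset.mem_sdiff, Finset.mem_offDiag, Finset.mem_offDiag] at he
    obtain ⟨⟨h1, h2, h3⟩, h4⟩ := he
    refine ⟨h1, h2, h3, ?_⟩
    by_contra hcon
    push_neg at hcon
    exact h4 ⟨Finset.mem_filter.mpr ⟨h1, hcon.1⟩, Finset.mem_filter.mpr ⟨h2, hcon.2⟩, h3⟩
  set Q : Finset (Pt × Pt) := P.filter (fun e => dE e.1 e.2 = 1) with hQdef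
  -- the counting bound
  obtain ⟨a0, ha0L, ha0max⟩ := L.exists_max_image Prod.fst hLn
  set Q1p : Finset (Pt × Pt) := Q.filter (fun e => e.2 = e.1 + t1) with hQ1pdef
  set Q1m : Finset (Pt × Pt) := Q.filter (fun e => e.2 = e.1 - t1) with hQ1mdef
  set Q2 : Finset (Pt × Pt) := Q.filter (fun e => e.1.2 = h ∧ e.2.2 ≠ h) with hQ2def
  set Q3 : Finset (Pt × Pt) := Q.filter (fun e => e.1.2 ≠ h) with hQ3def
  have hQfacts : ∀ e ∈ Q, e.1 ∈ D ∧ e.2 ∈ D ∧ e.1 ≠ e.2 ∧ (e.1.2 = h ∨ e.2.2 = h) ∧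
      dE e.1 e.2 = 1 := by
    intro e he
    rw [hQdef, Finset.mem_filter] at he
    obtain ⟨h1, h2, h3, h4⟩ := hPmem e he.1
    exact ⟨h1, h2, h3, h4, he.2⟩
  have hsplit : Q ⊆ Q1p ∪ Q1m ∪ Q2 ∪ Q3 := by
    intro e he
    obtain ⟨he1, he2, hne, hor, hdE⟩ := hQfacts e he
    simp only [Finset.mem_union, hQ1pdef, hQ1mdef, hQ2def, hQ3def, Finset.mem_filter]
    by_cases h1 : e.1.2 = h
    · by_cases h2 : e.2.2 = h
      · rcases same_line (h1.trans h2.symm) hdE with hy | hy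
        · exact Or.inl (Or.inl (Or.inl ⟨he, hy⟩))
        · exact Or.inl (Or.inl (Or.inr ⟨he, hy⟩))
      · exact Or.inl (Or.inr ⟨he, h1, h2⟩)
    · exact Or.inr ⟨he, h1⟩
  have hQ1pcard : Q1p.card ≤ ℓ - 1 := by
    have hle : Q1p.card ≤ (L.erase a0).card := by
      apply Finset.card_le_card_of_injOn (fun e => e.1)
      · intro e he
        rw [hQ1pdef, Finset.mem_coe, Finset.mem_filter] at he
        obtain ⟨heQ, hy⟩ := he
        obtain ⟨he1, he2, hne, hor, hdE⟩ := hQfacts e heQ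
        have h12 : e.2.2 = e.1.2 := by rw [hy]; simp [t1]
        have h1h : e.1.2 = h := by rcases hor with h' | h'; exact h'; rw [← h12]; exact h'
        have h2h : e.2.2 = h := by rw [h12]; exact h1h
        have he1L : e.1 ∈ L := Finset.mem_filter.mpr ⟨he1, h1h⟩
        have he2L : e.2 ∈ L := Finset.mem_filter.mpr ⟨he2, h2h⟩
        refine Finset.mem_erase.mpr ⟨?_, he1L⟩
        intro hcon
        have h21 : e.2.1 = e.1.1 + 1 := by rw [hy]; simp [t1]
        have := ha0max e.2 he2L
        rw [h21, show e.1 = a0 from hcon] at this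
        linarith
      · intro e he e' he' hee
        simp only [hQ1pdef, Finset.coe_filter, Set.mem_setOf_eq] at he he'
        have hee' : e.1 = e'.1 := hee
        exact Prod.ext_iff.mpr ⟨hee', by rw [he.2, he'.2, hee']⟩
    rwa [Finset.card_erase_of_mem ha0L] at hle
  have hQ1mcard : Q1m.card ≤ ℓ - 1 := by
    have hle : Q1m.card ≤ (L.erase a0).card := by
      apply Finset.card_le_card_of_injOn (fun e => e.2)
      · intro e he
        rw [hQ1mdef, Finset.mem_coe, Finset.mem_filter] at he
        obtain ⟨heQ, hy⟩ := he
        obtain ⟨he1, he2, hne, hor, hdE⟩ := hQfacts e heQ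
        have h12 : e.2.2 = e.1.2 := by rw [hy]; simp [t1]
        have h1h : e.1.2 = h := by rcases hor with h' | h'; exact h'; rw [← h12]; exact h'
        have h2h : e.2.2 = h := by rw [h12]; exact h1h
        have he1L : e.1 ∈ L := Finset.mem_filter.mpr ⟨he1, h1h⟩
        have he2L : e.2 ∈ L := Finset.mem_filter.mpr ⟨he2, h2h⟩
        refine Finset.mem_erase.mpr ⟨?_, he2L⟩
        intro hcon
        have h21 : e.1.1 = e.2.1 + 1 := by rw [hy]; simp [t1]
        have := ha0max e.1 he1L
        rw [h21, show e.2 = a0 from hcon] at this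
        linarith
      · intro e he e' he' hee
        simp only [hQ1mdef, Finset.coe_filter, Set.mem_setOf_eq] at he he'
        have hee' : e.2 = e'.2 := hee
        refine Prod.ext_iff.mpr ⟨?_, hee'⟩
        have hsub2 : e.1 - t1 = e'.1 - t1 := by rw [← he.2, ← he'.2, hee']
        exact sub_left_inj.mp hsub2
    rwa [Finset.card_erase_of_mem ha0L] at hle
  have hQ2card : Q2.card ≤ ℓ * 2 := by
    have hnb : ∀ e ∈ Q2, e.2 = e.1 - t2 ∨ e.2 = e.1 - t2 + t1 := by
      intro e he
      rw [hQ2def, Finset.mem_filter] at he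
      obtain ⟨heQ, h1h, h2h⟩ := he
      obtain ⟨he1, he2, hne, hor, hdE⟩ := hQfacts e heQ
      have hlt : e.2.2 < e.1.2 := by
        rw [h1h]
        exact lt_of_le_of_ne (hub e.2 he2) h2h
      exact below_neighbor (hDsub he1) (hDsub he2) hlt hdE
    have hle : Q2.card ≤ (L ×ˢ (Finset.univ : Finset (Fin 2))).card := by
      apply Finset.card_le_card_of_injOn
        (fun e => (e.1, if e.2 = e.1 - t2 then (0 : Fin 2) else 1))
      · intro e he
        have he' := he
        rw [hQ2def, Finset.mem_coe, Finset.mem_filter] at he'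
        obtain ⟨heQ, h1h, _⟩ := he'
        obtain ⟨he1, _, _, _, _⟩ := hQfacts e heQ
        exact Finset.mem_product.mpr ⟨Finset.mem_filter.mpr ⟨he1, h1h⟩, Finset.mem_univ _⟩
      · intro e he e' he' hee
        have h11 : e.1 = e'.1 := (Prod.ext_iff.mp hee).1
        have hflag := (Prod.ext_iff.mp hee).2
        simp only at hflag
        have hne := hnb e he
        have hne' := hnb e' he'
        by_cases hf : e.2 = e.1 - t2
        · have hf' : e'.2 = e'.1 - t2 := by
            by_contra hcon
            rw [if_pos hf, if_neg hcon] at hflag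
            exact absurd hflag (by decide)
          exact Prod.ext_iff.mpr ⟨h11, by rw [hf, hf', h11]⟩
        · have hf' : ¬ e'.2 = e'.1 - t2 := by
            intro hcon
            rw [if_neg hf, if_pos hcon] at hflag
            exact absurd hflag (by decide)
          have h2 : e.2 = e.1 - t2 + t1 := hne.resolve_left hf
          have h2' : e'.2 = e'.1 - t2 + t1 := hne'.resolve_left hf'
          exact Prod.ext_iff.mpr ⟨h11, by rw [h2, h2', h11]⟩
    simpa [Finset.card_product] using hle
  have hQ3card : Q3.card ≤ ℓ * 2 := by
    have hnb : ∀ e ∈ Q3, e.1 = e.2 - t2 ∨ e.1 = e.2 - t2 + t1 := by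
      intro e he
      rw [hQ3def, Finset.mem_filter] at he
      obtain ⟨heQ, h1h⟩ := he
      obtain ⟨he1, he2, hne, hor, hdE⟩ := hQfacts e heQ
      have h2h : e.2.2 = h := hor.resolve_left h1h
      have hlt : e.1.2 < e.2.2 := by
        rw [h2h]
        exact lt_of_le_of_ne (hub e.1 he1) h1h
      exact below_neighbor (hDsub he2) (hDsub he1) hlt (by rw [dE_comm]; exact hdE)
    have hle : Q3.card ≤ (L ×ˢ (Finset.univ : Finset (Fin 2))).card := by
      apply Finset.card_le_card_of_injOn
        (fun e => (e.2, if e.1 = e.2 - t2 then (0 : Fin 2) else 1))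
      · intro e he
        have he' := he
        rw [hQ3def, Finset.mem_coe, Finset.mem_filter] at he'
        obtain ⟨heQ, h1h⟩ := he'
        obtain ⟨_, he2, _, hor, _⟩ := hQfacts e heQ
        have h2h : e.2.2 = h := hor.resolve_left h1h
        exact Finset.mem_product.mpr ⟨Finset.mem_filter.mpr ⟨he2, h2h⟩, Finset.mem_univ _⟩
      · intro e he e' he' hee
        have h11 : e.2 = e'.2 := (Prod.ext_iff.mp hee).1
        have hflag := (Prod.ext_iff.mp hee).2
        simp only at hflag
        have hne := hnb e he
        have hne' := hnb e' he'
        by_cases hf : e.1 = e.2 - t2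
        · have hf' : e'.1 = e'.2 - t2 := by
            by_contra hcon
            rw [if_pos hf, if_neg hcon] at hflag
            exact absurd hflag (by decide)
          exact Prod.ext_iff.mpr ⟨by rw [hf, hf', h11], h11⟩
        · have hf' : ¬ e'.1 = e'.2 - t2 := by
            intro hcon
            rw [if_neg hf, if_pos hcon] at hflag
            exact absurd hflag (by decide)
          have h2 : e.1 = e.2 - t2 + t1 := hne.resolve_left hf
          have h2' : e'.1 = e'.2 - t2 + t1 := hne'.resolve_left hf'
          exact Prod.ext_iff.mpr ⟨by rw [h2, h2', h11], h11⟩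
    simpa [Finset.card_product] using hle
  have hQcardN : Q.card ≤ (ℓ - 1) + (ℓ - 1) + ℓ * 2 + ℓ * 2 := by
    calc Q.card ≤ (Q1p ∪ Q1m ∪ Q2 ∪ Q3).card := Finset.card_le_card hsplit
      _ ≤ (Q1p ∪ Q1m ∪ Q2).card + Q3.card := Finset.card_union_le _ _
      _ ≤ (Q1p ∪ Q1m).card + Q2.card + Q3.card :=
          Nat.add_le_add_right (Finset.card_union_le _ _) _
      _ ≤ Q1p.card + Q1m.card + Q2.card + Q3.card :=
          Nat.add_le_add_right (Nat.add_le_add_right (Finset.card_union_le _ _) _) _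
      _ ≤ (ℓ - 1) + (ℓ - 1) + ℓ * 2 + ℓ * 2 := by
          exact Nat.add_le_add (Nat.add_le_add (Nat.add_le_add hQ1pcard hQ1mcard) hQ2card) hQ3card
  have hQcardR : (Q.card : ℝ) ≤ 6 * (ℓ : ℝ) - 2 := by
    have h6 : Q.card ≤ 6 * ℓ - 2 := by omega
    have : ((6 * ℓ - 2 : ℕ) : ℝ) = 6 * (ℓ : ℝ) - 2 := by
      have : 2 ≤ 6 * ℓ := by omega
      push_cast [Nat.cast_sub this]
      ring
    rw [← this]
    exact_mod_cast h6
  -- the energy decomposition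
  have hOD : ∑ e ∈ D.offDiag, vF cF (dE e.1 e.2)
      = ∑ e ∈ D'.offDiag, vF cF (dE e.1 e.2) + ∑ e ∈ P, vF cF (dE e.1 e.2) := by
    rw [hPdef, ← Finset.sum_sdiff hod, add_comm]
  have hv1 : ∑ x ∈ D, v1 cS p q x = ∑ x ∈ D', v1 cS p q x := by
    symm
    apply Finset.sum_subset hsub'
    intro x hx hx'
    have hxh : x.2 = h := by
      by_contra hne
      exact hx' (Finset.mem_filter.mpr ⟨hx, hne⟩)
    rw [v1, if_neg]
    rintro ⟨k, hk⟩
    have hx2 : x.2 = eS p q := by rw [hk]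
    rw [hxh] at hx2
    linarith
  have hVD : Vn cF cS p q D = Vn cF cS p q D' + ∑ e ∈ P, vF cF (dE e.1 e.2) := by
    rw [Vn, Vn, hOD, hv1, add_right_comm]
  -- the sum lower bound
  have hsum1 : ((∑ e ∈ P, (if dE e.1 e.2 = 1 then -cF else 0) : ℝ) : EReal)
      ≤ ∑ e ∈ P, vF cF (dE e.1 e.2) := by
    rw [ereal_coe_sum]
    exact Finset.sum_le_sum (fun e _ => vF_ge cF _)
  have hsum2 : (∑ e ∈ P, (if dE e.1 e.2 = 1 then -cF else 0 : ℝ)) = -(cF * (Q.card : ℝ)) := by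
    rw [← Finset.sum_filter, ← hQdef, Finset.sum_const, nsmul_eq_mul]
    ring
  have hcast : (((ℓ - 1 : ℕ)) : ℝ) = (ℓ : ℝ) - 1 := by
    push_cast [Nat.cast_sub hl1]
    ring
  set c : ℝ := 6 * cF * ((((ℓ - 1 : ℕ)) : ℝ)) + 4 * cF with hcdef
  have hkey : ((-c : ℝ) : EReal) ≤ ∑ e ∈ P, vF cF (dE e.1 e.2) := by
    refine le_trans ?_ hsum1
    rw [EReal.coe_le_coe_iff, hsum2, hcdef, hcast]
    nlinarith [mul_le_mul_of_nonneg_left hQcardR hcF.le]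
  rw [ge_iff_le, hVD, sub_eq_add_neg]
  refine le_trans (add_le_add (le_refl (Vn cF cS p q D')) ?_) (le_refl _)
  rw [← EReal.coe_neg]
  exact hkey
end
end

section
/- For every n ∈ ℕ and every configuration D_n ∈ C_n: 6c_F n + V_n(D_n) ≥ Δ_strip · #(D_n ∩ ∂L_{FS}) + c_F · #(∂D_n \ S(∂L_{FS})). -/
open scoped BigOperators Classical Topology ENNReal
open Filter MeasureTheory

noncomputable section

namespace StripAux

lemma s3_pos : (0:ℝ) < Real.sqrt 3 := Real.sqrt_pos.mpr (by norm_num)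
lemma s3_sq : Real.sqrt 3 ^ 2 = 3 := Real.sq_sqrt (by norm_num)

def dirs : Finset Pt := {t1, -t1, t2, -t2, t1 - t2, t2 - t1}

lemma hne1 : ¬ (-(Real.sqrt 3/2) = Real.sqrt 3/2) := by have := s3_pos; intro h; nlinarith
lemma hne2 : ¬ (Real.sqrt 3/2 = -(Real.sqrt 3/2)) := by have := s3_pos; intro h; nlinarith
lemma hne3 : ¬ (Real.sqrt 3/2 = 0) := by have := s3_pos; intro h; nlinarith
lemma hne4 : ¬ ((0:ℝ) = Real.sqrt 3/2) := by have := s3_pos; intro h; nlinarith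
lemma hne5 : ¬ ((0:ℝ) = -(Real.sqrt 3/2)) := by have := s3_pos; intro h; nlinarith
lemma hne6 : ¬ (-(Real.sqrt 3/2) = 0) := by have := s3_pos; intro h; nlinarith

lemma dirs_card : dirs.card = 6 := by
  simp only [dirs]
  rw [Finset.card_insert_of_notMem, Finset.card_insert_of_notMem,
    Finset.card_insert_of_notMem, Finset.card_insert_of_notMem,
    Finset.card_insert_of_notMem, Finset.card_singleton] <;>
  · norm_num [t1, t2, Prod.ext_iff, hne1, hne2, hne3, hne4, hne5, hne6]

end StripAux
namespace StripAux

lemma LF_memP {p q : ℕ} {x : Pt} (hx : x ∈ LF p q) :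
    ∃ (a : ℤ) (b : ℕ), x.1 = (a:ℝ) + (b:ℝ)/2 ∧ x.2 = eS p q + (b:ℝ)*(Real.sqrt 3/2) := by
  obtain ⟨a, b, h⟩ := hx
  refine ⟨a, b, ?_, ?_⟩ <;> rw [h] <;>
    simp [t1, t2, Prod.fst_add, Prod.snd_add, Prod.smul_fst, Prod.smul_snd, smul_eq_mul] <;> ring

lemma LF_diff {p q : ℕ} {x y : Pt} (hx : x ∈ LF p q) (hy : y ∈ LF p q) :
    ∃ a b : ℤ, y.1 - x.1 = (a:ℝ) + (b:ℝ)/2 ∧ y.2 - x.2 = (b:ℝ)*(Real.sqrt 3/2) := by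
  obtain ⟨a, b, h1, h2⟩ := LF_memP hx
  obtain ⟨a', b', h1', h2'⟩ := LF_memP hy
  refine ⟨a' - a, (b' : ℤ) - (b : ℤ), ?_, ?_⟩
  · rw [h1, h1']; push_cast; ring
  · rw [h2, h2']; push_cast; ring

lemma LF_snd_ge {p q : ℕ} {x : Pt} (hx : x ∈ LF p q) : eS p q ≤ x.2 := by
  obtain ⟨a, b, _, h2⟩ := LF_memP hx
  have := s3_pos
  rw [h2]
  nlinarith [Nat.cast_nonneg (α := ℝ) b]

lemma dE_sq (x y : Pt) : dE x y ^ 2 = (x.1 - y.1)^2 + (x.2 - y.2)^2 :=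
  Real.sq_sqrt (by positivity)

lemma dE_nonneg (x y : Pt) : 0 ≤ dE x y := Real.sqrt_nonneg _

lemma diff_sq {x y : Pt} {a b : ℤ}
    (h1 : y.1 - x.1 = (a:ℝ) + (b:ℝ)/2) (h2 : y.2 - x.2 = (b:ℝ)*(Real.sqrt 3/2)) :
    dE x y ^ 2 = ((a^2 + a*b + b^2 : ℤ) : ℝ) := by
  rw [dE_sq]
  have h3 := s3_sq
  have e1 : x.1 - y.1 = -((a:ℝ) + (b:ℝ)/2) := by linarith
  have e2 : x.2 - y.2 = -((b:ℝ)*(Real.sqrt 3/2)) := by linarith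
  rw [e1, e2]
  push_cast
  nlinarith [h3]

lemma quad_cases {a b : ℤ} (h : a^2 + a*b + b^2 = 1) :
    (a = 1 ∧ b = 0) ∨ (a = -1 ∧ b = 0) ∨ (a = 0 ∧ b = 1) ∨ (a = 0 ∧ b = -1) ∨
    (a = 1 ∧ b = -1) ∨ (a = -1 ∧ b = 1) := by
  have hb : b^2 ≤ 1 := by nlinarith [sq_nonneg (2*a + b)]
  have ha : a^2 ≤ 1 := by nlinarith [sq_nonneg (a + 2*b)]
  have hb' : -1 ≤ b ∧ b ≤ 1 := abs_le.mp (by nlinarith [sq_abs b, abs_nonneg b] : |b| ≤ 1)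
  have ha' : -1 ≤ a ∧ a ≤ 1 := abs_le.mp (by nlinarith [sq_abs a, abs_nonneg a] : |a| ≤ 1)
  obtain ⟨hb1, hb2⟩ := hb'; obtain ⟨ha1, ha2⟩ := ha'
  interval_cases a <;> interval_cases b <;> omega

lemma quad_pos {a b : ℤ} (h : ¬ (a = 0 ∧ b = 0)) : 1 ≤ a^2 + a*b + b^2 := by
  rcases eq_or_ne b 0 with hb | hb
  · subst hb
    have ha : a ≠ 0 := by tauto
    nlinarith [Int.one_le_abs ha, sq_abs a, abs_nonneg a]
  · have : 1 ≤ b^2 := by nlinarith [Int.one_le_abs hb, sq_abs b, abs_nonneg b]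
    nlinarith [sq_nonneg (2*a + b)]

lemma dirs_dE {x d : Pt} (hd : d ∈ dirs) : dE x (x + d) = 1 := by
  have h3 := s3_sq
  have key : (x.1 - (x + d).1)^2 + (x.2 - (x + d).2)^2 = 1 := by
    simp only [dirs, Finset.mem_insert, Finset.mem_singleton] at hd
    rcases hd with rfl|rfl|rfl|rfl|rfl|rfl <;>
      simp only [t1, t2, Prod.fst_add, Prod.snd_add, Prod.fst_neg, Prod.snd_neg,
        Prod.fst_sub, Prod.snd_sub] <;> nlinarith
  rw [dE, key, Real.sqrt_one]

lemma dE_one_mem_dirs {p q : ℕ} {x y : Pt} (hx : x ∈ LF p q) (hy : y ∈ LF p q)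
    (h : dE x y = 1) : ∃ d ∈ dirs, y = x + d := by
  obtain ⟨a, b, h1, h2⟩ := LF_diff hx hy
  have hsq : dE x y ^ 2 = ((a^2 + a*b + b^2 : ℤ) : ℝ) := diff_sq h1 h2
  rw [h] at hsq
  have hq1 : a^2 + a*b + b^2 = 1 := by exact_mod_cast hsq.symm
  rcases quad_cases hq1 with ⟨rfl, rfl⟩|⟨rfl, rfl⟩|⟨rfl, rfl⟩|⟨rfl, rfl⟩|⟨rfl, rfl⟩|⟨rfl, rfl⟩ <;>
    norm_num at h1 h2
  · exact ⟨t1, by simp [dirs], Prod.ext_iff.mpr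
      ⟨by simp only [t1, Prod.fst_add]; linarith, by simp only [t1, Prod.snd_add]; linarith⟩⟩
  · exact ⟨-t1, by simp [dirs], Prod.ext_iff.mpr
      ⟨by simp only [t1, Prod.fst_add, Prod.fst_neg]; linarith,
       by simp only [t1, Prod.snd_add, Prod.snd_neg]; linarith⟩⟩
  · exact ⟨t2, by simp [dirs], Prod.ext_iff.mpr
      ⟨by simp only [t2, Prod.fst_add]; linarith, by simp only [t2, Prod.snd_add]; linarith⟩⟩
  · exact ⟨-t2, by simp [dirs], Prod.ext_iff.mpr
      ⟨by simp only [t2, Prod.fst_add, Prod.fst_neg]; linarith,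
       by simp only [t2, Prod.snd_add, Prod.snd_neg]; linarith⟩⟩
  · exact ⟨t1 - t2, by simp [dirs], Prod.ext_iff.mpr
      ⟨by simp only [t1, t2, Prod.fst_add, Prod.fst_sub]; linarith,
       by simp only [t1, t2, Prod.snd_add, Prod.snd_sub]; linarith⟩⟩
  · exact ⟨t2 - t1, by simp [dirs], Prod.ext_iff.mpr
      ⟨by simp only [t1, t2, Prod.fst_add, Prod.fst_sub]; linarith,
       by simp only [t1, t2, Prod.snd_add, Prod.snd_sub]; linarith⟩⟩

lemma LF_min_dist {p q : ℕ} {x y : Pt} (hx : x ∈ LF p q) (hy : y ∈ LF p q)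
    (hne : x ≠ y) : 1 ≤ dE x y := by
  obtain ⟨a, b, h1, h2⟩ := LF_diff hx hy
  have hab : ¬ (a = 0 ∧ b = 0) := by
    rintro ⟨rfl, rfl⟩
    norm_num at h1 h2
    exact hne (Prod.ext_iff.mpr ⟨by linarith, by linarith⟩)
  have hsq : dE x y ^ 2 = ((a^2 + a*b + b^2 : ℤ) : ℝ) := diff_sq h1 h2
  have h1' : (1:ℝ) ≤ ((a^2 + a*b + b^2 : ℤ) : ℝ) := by exact_mod_cast quad_pos hab
  nlinarith [dE_nonneg x y]

end StripAux
namespace StripAux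

lemma dirs_ne {x : Pt} {d : Pt} (hd : d ∈ dirs) : x + d ≠ x := by
  intro h
  have h1 : dE x (x + d) = 1 := dirs_dE hd
  rw [h] at h1
  have : dE x x = 0 := by simp [dE]
  rw [this] at h1; norm_num at h1

lemma B_eq {p q : ℕ} {D : Finset Pt} (hD : ↑D ⊆ LF p q) :
    (D.offDiag.filter fun e => dE e.1 e.2 = 1).card
      = ((D ×ˢ dirs).filter fun e => e.1 + e.2 ∈ D).card := by
  apply Finset.card_nbij' (i := fun e => (e.1, e.2 - e.1)) (j := fun e => (e.1, e.1 + e.2))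
  · intro e he
    simp only [Finset.mem_coe, Finset.mem_filter, Finset.mem_offDiag] at he
    obtain ⟨⟨h1, h2, h3⟩, h4⟩ := he
    obtain ⟨d, hd, hde⟩ := dE_one_mem_dirs (hD h1) (hD h2) h4
    have hd2 : e.2 - e.1 = d := by rw [hde]; abel
    simp only [Finset.mem_coe, Finset.mem_filter, Finset.mem_product, hd2]
    exact ⟨⟨h1, hd⟩, hde ▸ h2⟩
  · intro e he
    simp only [Finset.mem_coe, Finset.mem_filter, Finset.mem_product] at he
    obtain ⟨⟨h1, h2⟩, h3⟩ := he
    simp only [Finset.mem_coe, Finset.mem_filter, Finset.mem_offDiag]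
    exact ⟨⟨h1, h3, fun h => dirs_ne h2 h.symm⟩, dirs_dE h2⟩
  · intro e _
    show ((e.1, e.1 + (e.2 - e.1)) : Pt × Pt) = e
    rw [show e.1 + (e.2 - e.1) = e.2 by abel, Prod.mk.eta]
  · intro e _
    show ((e.1, e.1 + e.2 - e.1) : Pt × Pt) = e
    rw [show e.1 + e.2 - e.1 = e.2 by abel, Prod.mk.eta]

lemma count_eq {p q : ℕ} {D : Finset Pt} (hD : ↑D ⊆ LF p q) :
    (D.offDiag.filter fun e => dE e.1 e.2 = 1).card
      + ((D ×ˢ dirs).filter fun e => e.1 + e.2 ∉ D).card = 6 * D.card := by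
  rw [B_eq hD, Finset.card_filter_add_card_filter_not, Finset.card_product, dirs_card]
  ring

lemma deg_eq {p q : ℕ} {D : Finset Pt} (hD : ↑D ⊆ LF p q) {x : Pt} (hx : x ∈ D) :
    (D.filter fun y => dE x y = 1).card = (dirs.filter fun d => x + d ∈ D).card := by
  apply Finset.card_nbij' (i := fun y => y - x) (j := fun d => x + d)
  · intro y hy
    simp only [Finset.mem_coe, Finset.mem_filter] at hy
    obtain ⟨h1, h2⟩ := hy
    obtain ⟨d, hd, hde⟩ := dE_one_mem_dirs (hD hx) (hD h1) h2
    have hd2 : y - x = d := by rw [hde]; abel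
    simp only [Finset.mem_coe, Finset.mem_filter, hd2]
    exact ⟨hd, hde ▸ h1⟩
  · intro d hd
    simp only [Finset.mem_coe, Finset.mem_filter] at hd ⊢
    exact ⟨hd.2, dirs_dE hd.1⟩
  · intro y _; show x + (y - x) = y; abel
  · intro d _; show x + d - x = d; abel

lemma bdry_missing {p q : ℕ} {D : Finset Pt} (hD : ↑D ⊆ LF p q) {z : Pt}
    (hz : z ∈ bdry D) : ∃ d ∈ dirs, z + d ∉ D := by
  simp only [bdry, Finset.mem_filter] at hz
  obtain ⟨hz1, hz2⟩ := hz
  rw [deg_eq hD hz1] at hz2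
  have hsum := Finset.card_filter_add_card_filter_not
    (s := dirs) (p := fun d => z + d ∈ D)
  rw [dirs_card] at hsum
  have : 0 < (dirs.filter fun d => z + d ∉ D).card := by omega
  obtain ⟨d, hd⟩ := Finset.card_pos.mp this
  simp only [Finset.mem_filter] at hd
  exact ⟨d, hd.1, hd.2⟩

lemma colFinite (D : Finset Pt) (x : Pt) : {y : ℝ | ((x.1, y) : Pt) ∈ D}.Finite := by
  have : {y : ℝ | ((x.1, y) : Pt) ∈ D} = (fun y => ((x.1, y) : Pt)) ⁻¹' ↑D := rfl
  rw [this]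
  apply Set.Finite.preimage _ D.finite_toSet
  intro a _ b _ h
  exact congrArg Prod.snd h

lemma til_mem {D : Finset Pt} {x : Pt} (hx : x ∈ D) : til D x ∈ D := by
  have hne : x.2 ∈ {y : ℝ | ((x.1, y) : Pt) ∈ D} := by simp only [Set.mem_setOf_eq]; simpa using hx
  have := Set.Nonempty.csSup_mem ⟨x.2, hne⟩ (colFinite D x)
  exact this

lemma le_yM {D : Finset Pt} {x : Pt} (hx : x ∈ D) {y : ℝ} (hy : ((x.1, y) : Pt) ∈ D) :
    y ≤ yM D x :=
  le_csSup (Set.Finite.bddAbove (colFinite D x)) hy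

lemma x2_le_yM {D : Finset Pt} {x : Pt} (hx : x ∈ D) : x.2 ≤ yM D x :=
  le_yM hx (by simpa using hx)

lemma not_mem_above {D : Finset Pt} {x : Pt} (hx : x ∈ D) {w : Pt}
    (hw1 : w.1 = x.1) (hw2 : yM D x < w.2) : w ∉ D := by
  intro h
  have : ((x.1, w.2) : Pt) ∈ D := by rwa [← hw1, Prod.mk.eta]
  exact absurd (le_yM hx this) (not_le.mpr hw2)

lemma bLFS_snd {p q : ℕ} {x : Pt} (hx : x ∈ bLFS p q) : x.2 = eS p q := by
  obtain ⟨k, rfl⟩ := hx; rfl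

lemma bLFS_fst {p q : ℕ} {x : Pt} (hx : x ∈ bLFS p q) : ∃ k : ℤ, x.1 = (k : ℝ) * q := by
  obtain ⟨k, rfl⟩ := hx; exact ⟨k, rfl⟩

lemma bLFS_ext {p q : ℕ} {x x' : Pt} (hx : x ∈ bLFS p q) (hx' : x' ∈ bLFS p q)
    (h : x.1 = x'.1) : x = x' :=
  Prod.ext_iff.mpr ⟨h, by rw [bLFS_snd hx, bLFS_snd hx']⟩

lemma bLFS_diff {p q : ℕ} {x x' : Pt} (hx : x ∈ bLFS p q) (hx' : x' ∈ bLFS p q) :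
    ∃ j : ℤ, x.1 - x'.1 = (j : ℝ) * q := by
  obtain ⟨k, hk⟩ := bLFS_fst hx
  obtain ⟨k', hk'⟩ := bLFS_fst hx'
  exact ⟨k - k', by rw [hk, hk']; push_cast; ring⟩

lemma not_mem_low {p q : ℕ} {D : Finset Pt} (hD : ↑D ⊆ LF p q) {w : Pt}
    (hw : w.2 < eS p q) : w ∉ D := fun h => absurd (LF_snd_ge (hD h)) (not_le.mpr hw)

lemma ereal_coe_sum {α : Type*} (s : Finset α) (f : α → ℝ) :
    (((∑ a ∈ s, f a : ℝ)) : EReal) = ∑ a ∈ s, ((f a : ℝ) : EReal) := by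
  induction s using Finset.cons_induction with
  | empty => simp
  | cons a s ha ih => rw [Finset.sum_cons, Finset.sum_cons, EReal.coe_add, ih]

lemma Vn_eq {p q : ℕ} {D : Finset Pt} (cF cS : ℝ) (hD : ↑D ⊆ LF p q) :
    Vn cF cS p q D = (((-cF * ((D.offDiag.filter fun e => dE e.1 e.2 = 1).card : ℝ)
      + -cS * ((D.filter fun x => x ∈ bLFS p q).card : ℝ)) : ℝ) : EReal) := by
  unfold Vn
  have h1 : ∀ e ∈ D.offDiag, vF cF (dE e.1 e.2)
      = (((if dE e.1 e.2 = 1 then -cF else 0 : ℝ)) : EReal) := by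
    intro e he
    rw [Finset.mem_offDiag] at he
    have hge : ¬ dE e.1 e.2 < 1 := not_lt.mpr (LF_min_dist (hD he.1) (hD he.2.1) he.2.2)
    unfold vF
    rw [if_neg hge]
    split_ifs <;> simp
  rw [Finset.sum_congr rfl h1, ← ereal_coe_sum]
  have h2 : (∑ e ∈ D.offDiag, if dE e.1 e.2 = 1 then -cF else (0:ℝ))
      = -cF * ((D.offDiag.filter fun e => dE e.1 e.2 = 1).card : ℝ) := by
    rw [← Finset.sum_filter, Finset.sum_const, nsmul_eq_mul]; ring
  have h3 : (∑ x ∈ D, v1 cS p q x) = -cS * ((D.filter fun x => x ∈ bLFS p q).card : ℝ) := by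
    unfold v1
    rw [← Finset.sum_filter, Finset.sum_const, nsmul_eq_mul]; ring
  rw [h2, h3, ← EReal.coe_add]

end StripAux
namespace StripAux

lemma til_fst (D : Finset Pt) (x : Pt) : (til D x).1 = x.1 := rfl

def bdir (D : Finset Pt) (z : Pt) : Pt :=
  if h : ∃ d ∈ dirs, z + d ∉ D then h.choose else t1

lemma bdir_spec {D : Finset Pt} {z : Pt} (h : ∃ d ∈ dirs, z + d ∉ D) :
    bdir D z ∈ dirs ∧ z + bdir D z ∉ D := by
  unfold bdir
  rw [dif_pos h]
  exact h.choose_spec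

def FF (D : Finset Pt) (e : Pt × ℕ) : Pt × Pt :=
  match e with
  | (x, 0) => (x, -t2)
  | (x, 1) => (x, t1 - t2)
  | (x, 2) => if x + t1 ∈ D then (x + t1, t1 - t2) else (x, t1)
  | (x, 3) => if x - t1 ∈ D then (x - t1, -t2) else (x, -t1)
  | (x, 4) => if til D x + t2 ∈ D then (til D x + t2, t2 - t1) else (til D x, t2)
  | (x, 5) => if til D x + t2 - t1 ∈ D then (til D x + t2 - t1, t2) else (til D x, t2 - t1)
  | (x, _) => (x, bdir D x)

def II (q : ℕ) : Finset ℕ := if q = 1 then {0, 1, 4, 5} else {0, 1, 2, 3, 4, 5}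

lemma dne_a : t1 ≠ -t1 := by
  intro h; have h1 := congrArg Prod.fst h; have h2 := congrArg Prod.snd h
  simp only [t1, t2, Prod.fst_neg, Prod.snd_neg, Prod.fst_sub, Prod.snd_sub] at h1 h2
  all_goals nlinarith [s3_pos]
lemma dne_b : t1 ≠ t2 := by
  intro h; have h1 := congrArg Prod.fst h; have h2 := congrArg Prod.snd h
  simp only [t1, t2, Prod.fst_neg, Prod.snd_neg, Prod.fst_sub, Prod.snd_sub] at h1 h2
  all_goals nlinarith [s3_pos]
lemma dne_c : t1 ≠ -t2 := by
  intro h; have h1 := congrArg Prod.fst h; have h2 := congrArg Prod.snd h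
  simp only [t1, t2, Prod.fst_neg, Prod.snd_neg, Prod.fst_sub, Prod.snd_sub] at h1 h2
  all_goals nlinarith [s3_pos]
lemma dne_d : t1 ≠ t1 - t2 := by
  intro h; have h1 := congrArg Prod.fst h; have h2 := congrArg Prod.snd h
  simp only [t1, t2, Prod.fst_neg, Prod.snd_neg, Prod.fst_sub, Prod.snd_sub] at h1 h2
  all_goals nlinarith [s3_pos]
lemma dne_e : t1 ≠ t2 - t1 := by
  intro h; have h1 := congrArg Prod.fst h; have h2 := congrArg Prod.snd h
  simp only [t1, t2, Prod.fst_neg, Prod.snd_neg, Prod.fst_sub, Prod.snd_sub] at h1 h2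
  all_goals nlinarith [s3_pos]
lemma dne_f : -t1 ≠ t2 := by
  intro h; have h1 := congrArg Prod.fst h; have h2 := congrArg Prod.snd h
  simp only [t1, t2, Prod.fst_neg, Prod.snd_neg, Prod.fst_sub, Prod.snd_sub] at h1 h2
  all_goals nlinarith [s3_pos]
lemma dne_g : -t1 ≠ -t2 := by
  intro h; have h1 := congrArg Prod.fst h; have h2 := congrArg Prod.snd h
  simp only [t1, t2, Prod.fst_neg, Prod.snd_neg, Prod.fst_sub, Prod.snd_sub] at h1 h2
  all_goals nlinarith [s3_pos]
lemma dne_h : -t1 ≠ t1 - t2 := by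
  intro h; have h1 := congrArg Prod.fst h; have h2 := congrArg Prod.snd h
  simp only [t1, t2, Prod.fst_neg, Prod.snd_neg, Prod.fst_sub, Prod.snd_sub] at h1 h2
  all_goals nlinarith [s3_pos]
lemma dne_i : -t1 ≠ t2 - t1 := by
  intro h; have h1 := congrArg Prod.fst h; have h2 := congrArg Prod.snd h
  simp only [t1, t2, Prod.fst_neg, Prod.snd_neg, Prod.fst_sub, Prod.snd_sub] at h1 h2
  all_goals nlinarith [s3_pos]
lemma dne_j : t2 ≠ -t2 := by
  intro h; have h1 := congrArg Prod.fst h; have h2 := congrArg Prod.snd h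
  simp only [t1, t2, Prod.fst_neg, Prod.snd_neg, Prod.fst_sub, Prod.snd_sub] at h1 h2
  all_goals nlinarith [s3_pos]
lemma dne_k : t2 ≠ t1 - t2 := by
  intro h; have h1 := congrArg Prod.fst h; have h2 := congrArg Prod.snd h
  simp only [t1, t2, Prod.fst_neg, Prod.snd_neg, Prod.fst_sub, Prod.snd_sub] at h1 h2
  all_goals nlinarith [s3_pos]
lemma dne_l : t2 ≠ t2 - t1 := by
  intro h; have h1 := congrArg Prod.fst h; have h2 := congrArg Prod.snd h
  simp only [t1, t2, Prod.fst_neg, Prod.snd_neg, Prod.fst_sub, Prod.snd_sub] at h1 h2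
  all_goals nlinarith [s3_pos]
lemma dne_m : -t2 ≠ t1 - t2 := by
  intro h; have h1 := congrArg Prod.fst h; have h2 := congrArg Prod.snd h
  simp only [t1, t2, Prod.fst_neg, Prod.snd_neg, Prod.fst_sub, Prod.snd_sub] at h1 h2
  all_goals nlinarith [s3_pos]
lemma dne_n : -t2 ≠ t2 - t1 := by
  intro h; have h1 := congrArg Prod.fst h; have h2 := congrArg Prod.snd h
  simp only [t1, t2, Prod.fst_neg, Prod.snd_neg, Prod.fst_sub, Prod.snd_sub] at h1 h2
  all_goals nlinarith [s3_pos]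
lemma dne_o : t1 - t2 ≠ t2 - t1 := by
  intro h; have h1 := congrArg Prod.fst h; have h2 := congrArg Prod.snd h
  simp only [t1, t2, Prod.fst_neg, Prod.snd_neg, Prod.fst_sub, Prod.snd_sub] at h1 h2
  all_goals nlinarith [s3_pos]

lemma no_half_step {p q : ℕ} {x x' : Pt} (hx : x ∈ bLFS p q) (hx' : x' ∈ bLFS p q)
    (h : x.1 = x'.1 + 1/2 ∨ x.1 = x'.1 - 1/2) : False := by
  obtain ⟨j, hj⟩ := bLFS_diff hx hx'
  rcases h with h | h
  · have hz : ((2 * j * (q:ℤ) : ℤ) : ℝ) = 1 := by push_cast; rw [h] at hj; linarith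
    have hzz : (2 * j * (q:ℤ) : ℤ) = 1 := by exact_mod_cast hz
    have h2 : (2 : ℤ) ∣ 1 := ⟨j * q, by linarith⟩
    norm_num at h2
  · have hz : ((2 * j * (q:ℤ) : ℤ) : ℝ) = -1 := by push_cast; rw [h] at hj; linarith
    have hzz : (2 * j * (q:ℤ) : ℤ) = -1 := by exact_mod_cast hz
    have h2 : (2 : ℤ) ∣ 1 := ⟨-(j * q), by linarith⟩
    norm_num at h2

lemma no_one_step {p q : ℕ} (hq0 : 0 < q) (hq1 : q ≠ 1) {x x' : Pt}
    (hx : x ∈ bLFS p q) (hx' : x' ∈ bLFS p q)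
    (h : x.1 = x'.1 + 1 ∨ x.1 = x'.1 - 1) : False := by
  obtain ⟨j, hj⟩ := bLFS_diff hx hx'
  have hq2 : (2 : ℤ) ≤ (q : ℤ) := by omega
  rcases h with h | h
  · have hz : ((j * (q:ℤ) : ℤ) : ℝ) = 1 := by push_cast; rw [h] at hj; linarith
    have hzz : (j * (q:ℤ) : ℤ) = 1 := by exact_mod_cast hz
    rcases lt_trichotomy j 0 with hj0 | hj0 | hj0
    · nlinarith
    · subst hj0; simp at hzz
    · nlinarith
  · have hz : ((j * (q:ℤ) : ℤ) : ℝ) = -1 := by push_cast; rw [h] at hj; linarith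
    have hzz : (j * (q:ℤ) : ℤ) = -1 := by exact_mod_cast hz
    rcases lt_trichotomy j 0 with hj0 | hj0 | hj0
    · nlinarith
    · subst hj0; simp at hzz
    · nlinarith

lemma miss_low {p q : ℕ} {D : Finset Pt} (hD : ↑D ⊆ LF p q) {w d : Pt}
    (hw : w.2 = eS p q) (hd : d.2 = -(Real.sqrt 3/2)) : w + d ∉ D :=
  not_mem_low hD (by rw [Prod.snd_add, hw, hd]; linarith [s3_pos])

lemma miss_above {D : Finset Pt} {x w : Pt} (hx : x ∈ D) (h1 : w.1 = x.1)
    (h2 : w.2 = yM D x + Real.sqrt 3) : w ∉ D :=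
  not_mem_above hx h1 (by rw [h2]; linarith [s3_pos])

end StripAux
namespace StripAux

lemma til_snd (D : Finset Pt) (x : Pt) : (til D x).2 = yM D x := rfl

lemma II_sub {q : ℕ} {j : ℕ} (hj : j ∈ II q) :
    j = 0 ∨ j = 1 ∨ (j = 2 ∧ q ≠ 1) ∨ (j = 3 ∧ q ≠ 1) ∨ j = 4 ∨ j = 5 := by
  unfold II at hj
  split_ifs at hj with hq1 <;> simp at hj <;> tauto

lemma mem_S_of {p q : ℕ} {D : Finset Pt} {x w : Pt} (hxD : x ∈ D) (hxb : x ∈ bLFS p q)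
    (hwD : w ∈ D)
    (hw : w = x ∨ w = x + t1 ∨ w = x - t1 ∨ w = til D x ∨ w = til D x + t2 ∨
      w = til D x + t2 - t1) : w ∈ SLFS p q D :=
  Finset.mem_filter.mpr ⟨hwD, ⟨x, hxD, hxb, hw⟩⟩

lemma FF_fst_S {p q : ℕ} {D : Finset Pt} {x : Pt} (hxD : x ∈ D) (hxb : x ∈ bLFS p q)
    {i : ℕ} (hi : i ∈ II q) : (FF D (x, i)).1 ∈ SLFS p q D := by
  rcases II_sub hi with rfl | rfl | ⟨rfl, _⟩ | ⟨rfl, _⟩ | rfl | rfl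
  · exact mem_S_of hxD hxb hxD (Or.inl rfl)
  · exact mem_S_of hxD hxb hxD (Or.inl rfl)
  · simp only [FF]
    split_ifs with hc
    · exact mem_S_of hxD hxb hc (Or.inr (Or.inl rfl))
    · exact mem_S_of hxD hxb hxD (Or.inl rfl)
  · simp only [FF]
    split_ifs with hc
    · exact mem_S_of hxD hxb hc (Or.inr (Or.inr (Or.inl rfl)))
    · exact mem_S_of hxD hxb hxD (Or.inl rfl)
  · simp only [FF]
    split_ifs with hc
    · exact mem_S_of hxD hxb hc (Or.inr (Or.inr (Or.inr (Or.inr (Or.inl rfl)))))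
    · exact mem_S_of hxD hxb (til_mem hxD) (Or.inr (Or.inr (Or.inr (Or.inl rfl))))
  · simp only [FF]
    split_ifs with hc
    · exact mem_S_of hxD hxb hc (Or.inr (Or.inr (Or.inr (Or.inr (Or.inr rfl)))))
    · exact mem_S_of hxD hxb (til_mem hxD) (Or.inr (Or.inr (Or.inr (Or.inl rfl))))

lemma FF_mem_miss {p q : ℕ} {D : Finset Pt} (hD : ↑D ⊆ LF p q) {x : Pt} {i : ℕ}
    (hx : (i ∈ II q ∧ x ∈ D ∧ x ∈ bLFS p q) ∨ (i = 6 ∧ x ∈ bdry D ∧ x ∉ SLFS p q D)) :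
    FF D (x, i) ∈ (D ×ˢ dirs).filter fun e => e.1 + e.2 ∉ D := by
  rcases hx with ⟨hI, hxD, hxb⟩ | ⟨h6, hzb, _⟩
  · have hx2 : x.2 = eS p q := bLFS_snd hxb
    rcases II_sub hI with rfl | rfl | ⟨rfl, _⟩ | ⟨rfl, _⟩ | rfl | rfl
    · simp only [FF]
      refine Finset.mem_filter.mpr ⟨Finset.mem_product.mpr ⟨hxD, by simp [dirs]⟩, ?_⟩
      refine miss_low hD hx2 ?_
      simp [t2, Prod.snd_neg]
    · simp only [FF]
      refine Finset.mem_filter.mpr ⟨Finset.mem_product.mpr ⟨hxD, by simp [dirs]⟩, ?_⟩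
      refine miss_low hD hx2 ?_
      simp [t1, t2, Prod.snd_sub]
    · simp only [FF]
      split_ifs with hc
      · refine Finset.mem_filter.mpr ⟨Finset.mem_product.mpr ⟨hc, by simp [dirs]⟩, ?_⟩
        refine miss_low hD (by rw [Prod.snd_add, hx2]; norm_num [t1]) ?_
        simp [t1, t2, Prod.snd_sub]
      · exact Finset.mem_filter.mpr ⟨Finset.mem_product.mpr ⟨hxD, by simp [dirs]⟩, hc⟩
    · simp only [FF]
      split_ifs with hc
      · refine Finset.mem_filter.mpr ⟨Finset.mem_product.mpr ⟨hc, by simp [dirs]⟩, ?_⟩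
        refine miss_low hD (by rw [Prod.snd_sub, hx2]; norm_num [t1]) ?_
        simp [t2, Prod.snd_neg]
      · refine Finset.mem_filter.mpr ⟨Finset.mem_product.mpr ⟨hxD, by simp [dirs]⟩, ?_⟩
        rwa [← sub_eq_add_neg]
    · simp only [FF]
      split_ifs with hc
      · refine Finset.mem_filter.mpr ⟨Finset.mem_product.mpr ⟨hc, by simp [dirs]⟩, ?_⟩
        refine miss_above hxD ?_ ?_
        · simp only [Prod.fst_add, Prod.fst_sub, til_fst, t1, t2]
          ring
        · simp only [Prod.snd_add, Prod.snd_sub, til_snd, t1, t2]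
          ring
      · exact Finset.mem_filter.mpr
          ⟨Finset.mem_product.mpr ⟨til_mem hxD, by simp [dirs]⟩, hc⟩
    · simp only [FF]
      split_ifs with hc
      · refine Finset.mem_filter.mpr ⟨Finset.mem_product.mpr ⟨hc, by simp [dirs]⟩, ?_⟩
        refine miss_above hxD ?_ ?_
        · simp only [Prod.fst_add, Prod.fst_sub, til_fst, t1, t2]
          ring
        · simp only [Prod.snd_add, Prod.snd_sub, til_snd, t1, t2]
          ring
      · refine Finset.mem_filter.mpr
          ⟨Finset.mem_product.mpr ⟨til_mem hxD, by simp [dirs]⟩, ?_⟩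
        rwa [add_sub]
  · subst h6
    have hzD : x ∈ D := (Finset.mem_filter.mp hzb).1
    obtain ⟨hd1, hd2⟩ := bdir_spec (bdry_missing hD hzb)
    exact Finset.mem_filter.mpr ⟨Finset.mem_product.mpr ⟨hzD, hd1⟩, hd2⟩

end StripAux
namespace StripAux

lemma key {p q : ℕ} (hq0 : 0 < q) {D : Finset Pt}
    {x x' : Pt} {i i' : ℕ}
    (hx : (i ∈ II q ∧ x ∈ D ∧ x ∈ bLFS p q) ∨ (i = 6 ∧ x ∈ bdry D ∧ x ∉ SLFS p q D))
    (hx' : (i' ∈ II q ∧ x' ∈ D ∧ x' ∈ bLFS p q) ∨ (i' = 6 ∧ x' ∈ bdry D ∧ x' ∉ SLFS p q D))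
    (hle : i ≤ i') (h : FF D (x, i) = FF D (x', i')) : x = x' ∧ i = i' := by
  rcases hx with ⟨hI, hxD, hxb⟩ | ⟨h6, hzb, hzs⟩
  · rcases hx' with ⟨hI', hxD', hxb'⟩ | ⟨h6', hzb', hzs'⟩
    · -- strip / strip
      rcases II_sub hI with rfl | rfl | ⟨rfl, hqne⟩ | ⟨rfl, hqne⟩ | rfl | rfl <;>
        rcases II_sub hI' with rfl | rfl | ⟨rfl, hqne'⟩ | ⟨rfl, hqne'⟩ | rfl | rfl
      -- i = 0
      · exact ⟨congrArg Prod.fst h, rfl⟩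
      · exact absurd (congrArg Prod.snd h) dne_m
      · simp only [FF] at h
        split_ifs at h with hc
        · exact absurd (congrArg Prod.snd h) dne_m
        · exact absurd (congrArg Prod.snd h) (Ne.symm dne_c)
      · simp only [FF] at h
        split_ifs at h with hc
        · have hf : x = x' - t1 := congrArg Prod.fst h
          have hf1 : x.1 = x'.1 - 1 := by
            have h2 := congrArg Prod.fst hf
            simpa [t1, Prod.fst_sub] using h2
          exact (no_one_step hq0 hqne' hxb hxb' (Or.inr hf1)).elim
        · exact absurd (congrArg Prod.snd h) (Ne.symm dne_g)
      · simp only [FF] at h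
        split_ifs at h with hc
        · exact absurd (congrArg Prod.snd h) dne_n
        · exact absurd (congrArg Prod.snd h) (Ne.symm dne_j)
      · simp only [FF] at h
        split_ifs at h with hc
        · exact absurd (congrArg Prod.snd h) (Ne.symm dne_j)
        · exact absurd (congrArg Prod.snd h) dne_n
      -- i = 1
      · exact absurd hle (by omega)
      · exact ⟨congrArg Prod.fst h, rfl⟩
      · simp only [FF] at h
        split_ifs at h with hc
        · have hf : x = x' + t1 := congrArg Prod.fst h
          have hf1 : x.1 = x'.1 + 1 := by
            have h2 := congrArg Prod.fst hf
            simpa [t1, Prod.fst_add] using h2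
          exact (no_one_step hq0 hqne' hxb hxb' (Or.inl hf1)).elim
        · exact absurd (congrArg Prod.snd h) (Ne.symm dne_d)
      · simp only [FF] at h
        split_ifs at h with hc
        · exact absurd (congrArg Prod.snd h) (Ne.symm dne_m)
        · exact absurd (congrArg Prod.snd h) (Ne.symm dne_h)
      · simp only [FF] at h
        split_ifs at h with hc
        · exact absurd (congrArg Prod.snd h) dne_o
        · exact absurd (congrArg Prod.snd h) (Ne.symm dne_k)
      · simp only [FF] at h
        split_ifs at h with hc
        · exact absurd (congrArg Prod.snd h) (Ne.symm dne_k)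
        · exact absurd (congrArg Prod.snd h) dne_o
      -- i = 2
      · exact absurd hle (by omega)
      · exact absurd hle (by omega)
      · simp only [FF] at h
        split_ifs at h with hc hc'
        · exact ⟨add_right_cancel (congrArg Prod.fst h), rfl⟩
        · exact absurd (congrArg Prod.snd h) (Ne.symm dne_d)
        · exact absurd (congrArg Prod.snd h) dne_d
        · exact ⟨congrArg Prod.fst h, rfl⟩
      · simp only [FF] at h
        split_ifs at h with hc hc'
        · exact absurd (congrArg Prod.snd h) (Ne.symm dne_m)
        · exact absurd (congrArg Prod.snd h) (Ne.symm dne_h)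
        · exact absurd (congrArg Prod.snd h) dne_c
        · exact absurd (congrArg Prod.snd h) dne_a
      · simp only [FF] at h
        split_ifs at h with hc hc'
        · exact absurd (congrArg Prod.snd h) dne_o
        · exact absurd (congrArg Prod.snd h) (Ne.symm dne_k)
        · exact absurd (congrArg Prod.snd h) dne_e
        · exact absurd (congrArg Prod.snd h) dne_b
      · simp only [FF] at h
        split_ifs at h with hc hc'
        · exact absurd (congrArg Prod.snd h) (Ne.symm dne_k)
        · exact absurd (congrArg Prod.snd h) dne_o
        · exact absurd (congrArg Prod.snd h) dne_b
        · exact absurd (congrArg Prod.snd h) dne_e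
      -- i = 3
      · exact absurd hle (by omega)
      · exact absurd hle (by omega)
      · exact absurd hle (by omega)
      · simp only [FF] at h
        split_ifs at h with hc hc'
        · have hf : x - t1 = x' - t1 := congrArg Prod.fst h
          have h2 := congrArg (· + t1) hf
          simp only [sub_add_cancel] at h2
          exact ⟨h2, rfl⟩
        · exact absurd (congrArg Prod.snd h) (Ne.symm dne_g)
        · exact absurd (congrArg Prod.snd h) dne_g
        · exact ⟨congrArg Prod.fst h, rfl⟩
      · simp only [FF] at h
        split_ifs at h with hc hc'
        · exact absurd (congrArg Prod.snd h) dne_n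
        · exact absurd (congrArg Prod.snd h) (Ne.symm dne_j)
        · exact absurd (congrArg Prod.snd h) dne_i
        · exact absurd (congrArg Prod.snd h) dne_f
      · simp only [FF] at h
        split_ifs at h with hc hc'
        · exact absurd (congrArg Prod.snd h) (Ne.symm dne_j)
        · exact absurd (congrArg Prod.snd h) dne_n
        · exact absurd (congrArg Prod.snd h) dne_f
        · exact absurd (congrArg Prod.snd h) dne_i
      -- i = 4
      · exact absurd hle (by omega)
      · exact absurd hle (by omega)
      · exact absurd hle (by omega)
      · exact absurd hle (by omega)
      · simp only [FF] at h
        split_ifs at h with hc hc'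
        · have hf : til D x = til D x' := add_right_cancel (congrArg Prod.fst h)
          have h3 : (til D x).1 = (til D x').1 := congrArg Prod.fst hf
          exact ⟨bLFS_ext hxb hxb' h3, rfl⟩
        · exact absurd (congrArg Prod.snd h) (Ne.symm dne_l)
        · exact absurd (congrArg Prod.snd h) dne_l
        · have hf : til D x = til D x' := congrArg Prod.fst h
          have h3 : (til D x).1 = (til D x').1 := congrArg Prod.fst hf
          exact ⟨bLFS_ext hxb hxb' h3, rfl⟩
      · simp only [FF] at h
        split_ifs at h with hc hc'
        · exact absurd (congrArg Prod.snd h) (Ne.symm dne_l)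
        · have hf : til D x + t2 = til D x' := congrArg Prod.fst h
          have hf1 : x.1 + 1/2 = x'.1 := by
            have h2 := congrArg Prod.fst hf
            simpa [t2, Prod.fst_add, til_fst] using h2
          exact (no_half_step hxb hxb' (Or.inr (by linarith))).elim
        · have hf : til D x = til D x' + t2 - t1 := congrArg Prod.fst h
          have hf1 : x.1 = x'.1 + 1/2 - 1 := by
            have h2 := congrArg Prod.fst hf
            simpa [t1, t2, Prod.fst_add, Prod.fst_sub, til_fst] using h2
          exact (no_half_step hxb hxb' (Or.inr (by linarith))).elim
        · exact absurd (congrArg Prod.snd h) dne_l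
      -- i = 5
      · exact absurd hle (by omega)
      · exact absurd hle (by omega)
      · exact absurd hle (by omega)
      · exact absurd hle (by omega)
      · exact absurd hle (by omega)
      · simp only [FF] at h
        split_ifs at h with hc hc'
        · have hf : til D x + t2 - t1 = til D x' + t2 - t1 := congrArg Prod.fst h
          have h2 := congrArg (· + t1) hf
          simp only [sub_add_cancel] at h2
          have hf2 : til D x = til D x' := add_right_cancel h2
          have h3 : (til D x).1 = (til D x').1 := congrArg Prod.fst hf2
          exact ⟨bLFS_ext hxb hxb' h3, rfl⟩
        · exact absurd (congrArg Prod.snd h) dne_l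
        · exact absurd (congrArg Prod.snd h) (Ne.symm dne_l)
        · have hf : til D x = til D x' := congrArg Prod.fst h
          have h3 : (til D x).1 = (til D x').1 := congrArg Prod.fst hf
          exact ⟨bLFS_ext hxb hxb' h3, rfl⟩
    · -- strip / boundary
      subst h6'
      have hmem : x' ∈ SLFS p q D := by
        have hf : (FF D (x, i)).1 = x' := congrArg Prod.fst h
        rw [← hf]
        exact FF_fst_S hxD hxb hI
      exact absurd hmem hzs'
  · rcases hx' with ⟨hI', hxD', hxb'⟩ | ⟨h6', hzb', hzs'⟩
    · -- boundary / strip : impossible since i = 6 ≤ i' ≤ 5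
      subst h6
      have : i' ≤ 5 := by
        rcases II_sub hI' with rfl | rfl | ⟨rfl, _⟩ | ⟨rfl, _⟩ | rfl | rfl <;> omega
      exact absurd hle (by omega)
    · subst h6; subst h6'
      exact ⟨congrArg Prod.fst h, rfl⟩

end StripAux
namespace StripAux

lemma main_count {p q : ℕ} (hq0 : 0 < q) {D : Finset Pt} (hD : ↑D ⊆ LF p q) :
    (if q = 1 then 4 else 6) * (D.filter fun x => x ∈ bLFS p q).card
      + (bdry D \ SLFS p q D).card
      ≤ ((D ×ˢ dirs).filter fun e => e.1 + e.2 ∉ D).card := by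
  classical
  have hdisj : Disjoint ((D.filter fun x => x ∈ bLFS p q) ×ˢ II q)
      ((bdry D \ SLFS p q D) ×ˢ ({6} : Finset ℕ)) := by
    rw [Finset.disjoint_left]
    rintro e he1 he2
    have h1 : e.2 ∈ II q := (Finset.mem_product.mp he1).2
    have h2 : e.2 = 6 := Finset.mem_singleton.mp (Finset.mem_product.mp he2).2
    rw [h2] at h1
    rcases II_sub h1 with h | h | ⟨h, _⟩ | ⟨h, _⟩ | h | h <;> omega
  have hA : (if q = 1 then 4 else 6) * (D.filter fun x => x ∈ bLFS p q).card
      + (bdry D \ SLFS p q D).card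
      = (((D.filter fun x => x ∈ bLFS p q) ×ˢ II q)
          ∪ ((bdry D \ SLFS p q D) ×ˢ ({6} : Finset ℕ))).card := by
    rw [Finset.card_union_of_disjoint hdisj, Finset.card_product, Finset.card_product,
      Finset.card_singleton, mul_one]
    congr 1
    rw [mul_comm]
    congr 1
    unfold II
    split_ifs <;> decide
  rw [hA]
  apply Finset.card_le_card_of_injOn (FF D)
  · intro e he
    apply FF_mem_miss hD (x := e.1) (i := e.2)
    rw [Finset.mem_coe, Finset.mem_union] at he
    rcases he with he | he
    · rw [Finset.mem_product] at he
      have h3 := Finset.mem_filter.mp he.1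
      exact Or.inl ⟨he.2, h3.1, h3.2⟩
    · rw [Finset.mem_product] at he
      have h3 := Finset.mem_sdiff.mp he.1
      exact Or.inr ⟨Finset.mem_singleton.mp he.2, h3.1, h3.2⟩
  · intro e he e' he' hFF
    have conv : ∀ a : Pt × ℕ, a ∈ (((D.filter fun x => x ∈ bLFS p q) ×ˢ II q)
          ∪ ((bdry D \ SLFS p q D) ×ˢ ({6} : Finset ℕ))) →
        (a.2 ∈ II q ∧ a.1 ∈ D ∧ a.1 ∈ bLFS p q)
          ∨ (a.2 = 6 ∧ a.1 ∈ bdry D ∧ a.1 ∉ SLFS p q D) := by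
      intro a ha
      rw [Finset.mem_union] at ha
      rcases ha with ha | ha
      · rw [Finset.mem_product] at ha
        have h3 := Finset.mem_filter.mp ha.1
        exact Or.inl ⟨ha.2, h3.1, h3.2⟩
      · rw [Finset.mem_product] at ha
        have h3 := Finset.mem_sdiff.mp ha.1
        exact Or.inr ⟨Finset.mem_singleton.mp ha.2, h3.1, h3.2⟩
    rcases le_total e.2 e'.2 with hle | hle
    · obtain ⟨h1, h2⟩ := key hq0 (conv e (Finset.mem_coe.mp he))
        (conv e' (Finset.mem_coe.mp he')) hle hFF
      exact Prod.ext_iff.mpr ⟨h1, h2⟩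
    · obtain ⟨h1, h2⟩ := key hq0 (conv e' (Finset.mem_coe.mp he'))
        (conv e (Finset.mem_coe.mp he)) hle hFF.symm
      exact Prod.ext_iff.mpr ⟨h1.symm, h2.symm⟩

end StripAux

open StripAux


/-- `6 c_F n + V_n(D_n) ≥ Δ_strip #(D_n ∩ ∂L_{FS}) + c_F #(∂D_n \ S(∂L_{FS}))`. -/
theorem strip_count_lower_bound
    (cF cS : ℝ) (hcF : 0 < cF) (hcS : 0 < cS)
    (p q : ℕ) (hp : 0 < p) (hq : 0 < q) (hpq : Nat.Coprime p q)
    (n : ℕ) (D : Finset Pt) (hD : D ∈ Cn p q n) :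
    (((DeltaStrip cF cS q * (((D.filter fun x => x ∈ bLFS p q).card : ℕ) : ℝ) +
        cF * (((bdry D \ SLFS p q D).card : ℕ) : ℝ)) : ℝ) : EReal) ≤
      ((6 * cF * (n : ℝ) : ℝ) : EReal) + Vn cF cS p q D := by

  obtain ⟨hsub, hcard⟩ := hD
  have hBM := count_eq hsub
  have hMC := main_count hq hsub
  rw [Vn_eq cF cS hsub, ← EReal.coe_add, EReal.coe_le_coe_iff]
  rw [hcard] at hBM
  set Bc := (D.offDiag.filter fun e => dE e.1 e.2 = 1).card with hBdef
  set Mc := ((D ×ˢ dirs).filter fun e => e.1 + e.2 ∉ D).card with hMdef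
  set mc := (D.filter fun x => x ∈ bLFS p q).card with hmdef
  set bc := (bdry D \ SLFS p q D).card with hbdef
  have h1 : (Bc : ℝ) + Mc = 6 * n := by exact_mod_cast hBM
  rcases eq_or_ne q 1 with hq1 | hq1
  · have h2 : 4 * (mc : ℝ) + bc ≤ Mc := by exact_mod_cast (by simpa [hq1] using hMC)
    unfold DeltaStrip
    rw [if_pos hq1]
    nlinarith [mul_le_mul_of_nonneg_left h2 hcF.le, h1, hcF.le]
  · have h2 : 6 * (mc : ℝ) + bc ≤ Mc := by exact_mod_cast (by simpa [hq1] using hMC)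
    unfold DeltaStrip
    rw [if_neg hq1]
    nlinarith [mul_le_mul_of_nonneg_left h2 hcF.le, h1, hcF.le]
end
end

section
/- Assume the dewetting condition. Set Δ := min{Δ_strip/6, c_F}, which is strictly positive. Then for every n ∈ ℕ and every configuration D_n ∈ C_n: V_n(D_n) ≥ −6c_F n + Δ · #∂D_n. -/
open scoped BigOperators Classical Topology ENNReal
open Filter MeasureTheory

noncomputable section

/-! ### Auxiliary lemmas for the proof -/

lemma sqrt3_pos : (0:ℝ) < Real.sqrt 3 := Real.sqrt_pos.mpr (by norm_num)

lemma sq_sqrt3 : Real.sqrt 3 ^ 2 = 3 := Real.sq_sqrt (by norm_num)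

lemma fst_t1 : t1.1 = (1:ℝ) := rfl
lemma snd_t1 : t1.2 = (0:ℝ) := rfl
lemma fst_t2 : t2.1 = (1/2:ℝ) := rfl
lemma snd_t2 : t2.2 = Real.sqrt 3 / 2 := rfl
lemma fst_neg_t1 : (-t1).1 = -(1:ℝ) := rfl
lemma snd_neg_t1 : (-t1).2 = -(0:ℝ) := rfl
lemma fst_neg_t2 : (-t2).1 = -(1/2:ℝ) := rfl
lemma snd_neg_t2 : (-t2).2 = -(Real.sqrt 3 / 2) := rfl
lemma fst_t2t1 : (t2 - t1).1 = (1/2:ℝ) - 1 := rfl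
lemma snd_t2t1 : (t2 - t1).2 = Real.sqrt 3 / 2 - 0 := rfl
lemma fst_t1t2 : (t1 - t2).1 = (1:ℝ) - 1/2 := rfl
lemma snd_t1t2 : (t1 - t2).2 = (0:ℝ) - Real.sqrt 3 / 2 := rfl

lemma pt_clash {d e : Pt} (h1 : d.1 = e.1 → d.2 = e.2 → False) : d ≠ e :=
  fun hc => h1 (congrArg Prod.fst hc) (congrArg Prod.snd hc)

/-- the six admissible directions of the triangular lattice -/
noncomputable def Dirs6 : Finset Pt := {t1, -t1, t2, -t2, t2 - t1, t1 - t2}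

lemma neAB : t1 ≠ -t1 := pt_clash (by intro h1 h2; rw [fst_t1, fst_neg_t1] at h1; norm_num at h1)
lemma neAC : t1 ≠ t2 := pt_clash (by intro h1 h2; rw [fst_t1, fst_t2] at h1; norm_num at h1)
lemma neAD : t1 ≠ -t2 := pt_clash (by intro h1 h2; rw [fst_t1, fst_neg_t2] at h1; norm_num at h1)
lemma neAE : t1 ≠ t2 - t1 := pt_clash (by intro h1 h2; rw [fst_t1, fst_t2t1] at h1; norm_num at h1)
lemma neAF : t1 ≠ t1 - t2 := pt_clash (by intro h1 h2; rw [fst_t1, fst_t1t2] at h1; norm_num at h1)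
lemma neBC : -t1 ≠ t2 := pt_clash (by intro h1 h2; rw [fst_neg_t1, fst_t2] at h1; norm_num at h1)
lemma neBD : -t1 ≠ -t2 := pt_clash (by intro h1 h2; rw [fst_neg_t1, fst_neg_t2] at h1; norm_num at h1)
lemma neBE : -t1 ≠ t2 - t1 :=
  pt_clash (by intro h1 h2; rw [fst_neg_t1, fst_t2t1] at h1; norm_num at h1)
lemma neBF : -t1 ≠ t1 - t2 :=
  pt_clash (by intro h1 h2; rw [fst_neg_t1, fst_t1t2] at h1; norm_num at h1)
lemma neCD : t2 ≠ -t2 := pt_clash (by intro h1 h2; rw [fst_t2, fst_neg_t2] at h1; norm_num at h1)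
lemma neCE : t2 ≠ t2 - t1 := pt_clash (by intro h1 h2; rw [fst_t2, fst_t2t1] at h1; norm_num at h1)
lemma neCF : t2 ≠ t1 - t2 :=
  pt_clash (by intro h1 h2; rw [snd_t2, snd_t1t2] at h2; linarith [sqrt3_pos])
lemma neDE : -t2 ≠ t2 - t1 :=
  pt_clash (by intro h1 h2; rw [snd_neg_t2, snd_t2t1] at h2; linarith [sqrt3_pos])
lemma neDF : -t2 ≠ t1 - t2 :=
  pt_clash (by intro h1 h2; rw [fst_neg_t2, fst_t1t2] at h1; norm_num at h1)
lemma neEF : t2 - t1 ≠ t1 - t2 :=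
  pt_clash (by intro h1 h2; rw [fst_t2t1, fst_t1t2] at h1; norm_num at h1)

lemma Dirs6_card : Dirs6.card = 6 := by
  show ({t1, -t1, t2, -t2, t2 - t1, t1 - t2} : Finset Pt).card = 6
  rw [Finset.card_insert_of_notMem (by
        simp only [Finset.mem_insert, Finset.mem_singleton]; push_neg
        exact ⟨neAB, neAC, neAD, neAE, neAF⟩),
      Finset.card_insert_of_notMem (by
        simp only [Finset.mem_insert, Finset.mem_singleton]; push_neg
        exact ⟨neBC, neBD, neBE, neBF⟩),
      Finset.card_insert_of_notMem (by
        simp only [Finset.mem_insert, Finset.mem_singleton]; push_neg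
        exact ⟨neCD, neCE, neCF⟩),
      Finset.card_insert_of_notMem (by
        simp only [Finset.mem_insert, Finset.mem_singleton]; push_neg
        exact ⟨neDE, neDF⟩),
      Finset.card_insert_of_notMem (by
        simp only [Finset.mem_singleton]; exact neEF),
      Finset.card_singleton]

lemma LF_coords {p q : ℕ} {x : Pt} (h : x ∈ LF p q) :
    ∃ (a : ℤ) (b : ℕ), x.1 = (a : ℝ) + (b : ℝ)/2 ∧ x.2 = eS p q + (b:ℝ) * (Real.sqrt 3 / 2) := by
  obtain ⟨a, b, hx⟩ := h
  have h1 : x.1 = 0 + (a:ℝ) * 1 + (b:ℝ) * (1/2) := by rw [hx]; rfl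
  have h2 : x.2 = eS p q + (a:ℝ) * 0 + (b:ℝ) * (Real.sqrt 3 / 2) := by rw [hx]; rfl
  exact ⟨a, b, by rw [h1]; ring, by rw [h2]; ring⟩

lemma LF_snd_ge {p q : ℕ} {x : Pt} (h : x ∈ LF p q) : eS p q ≤ x.2 := by
  obtain ⟨a, b, -, h2⟩ := LF_coords h
  have hb : (0:ℝ) ≤ (b:ℝ) * (Real.sqrt 3 / 2) := by positivity
  rw [h2]; linarith

lemma bLFS_snd {p q : ℕ} {x : Pt} (h : x ∈ bLFS p q) : x.2 = eS p q := by
  obtain ⟨k, hk⟩ := h; rw [hk]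

lemma quad_form {p q : ℕ} {x y : Pt} (hx : x ∈ LF p q) (hy : y ∈ LF p q) :
    ∃ m1 m2 : ℤ, y.1 - x.1 = (m1:ℝ) + (m2:ℝ)/2 ∧ y.2 - x.2 = (m2:ℝ) * (Real.sqrt 3 / 2) ∧
      (x.1 - y.1)^2 + (x.2 - y.2)^2 = ((m1^2 + m1*m2 + m2^2 : ℤ) : ℝ) := by
  obtain ⟨a1, b1, hx1, hx2⟩ := LF_coords hx
  obtain ⟨a2, b2, hy1, hy2⟩ := LF_coords hy
  refine ⟨a2 - a1, (b2:ℤ) - (b1:ℤ), ?_, ?_, ?_⟩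
  · rw [hx1, hy1]; push_cast; ring
  · rw [hx2, hy2]; push_cast; ring
  · rw [hx1, hy1, hx2, hy2]; push_cast
    linear_combination (((b2:ℝ) - (b1:ℝ))^2/4) * sq_sqrt3

lemma dE_self (x : Pt) : dE x x = 0 := by simp [dE]

lemma dE_not_lt_one {p q : ℕ} {x y : Pt} (hx : x ∈ LF p q) (hy : y ∈ LF p q) (hne : x ≠ y) :
    ¬ dE x y < 1 := by
  obtain ⟨m1, m2, h1, h2, hQ⟩ := quad_form hx hy
  have hNpos : 1 ≤ m1^2 + m1*m2 + m2^2 := by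
    by_contra hlt
    push_neg at hlt
    have hle : m1^2 + m1*m2 + m2^2 ≤ 0 := by omega
    have hm2 : m2 = 0 := by nlinarith [sq_nonneg (2*m1 + m2), sq_nonneg m2]
    have hm1 : m1 = 0 := by nlinarith
    subst hm1
    subst hm2
    push_cast at h1 h2
    exact hne (Prod.ext_iff.mpr ⟨by linarith, by nlinarith⟩)
  intro hlt
  have h1le : (1:ℝ) ≤ (x.1 - y.1)^2 + (x.2 - y.2)^2 := by rw [hQ]; exact_mod_cast hNpos
  have hsq : Real.sqrt 1 ≤ Real.sqrt ((x.1 - y.1)^2 + (x.2 - y.2)^2) := Real.sqrt_le_sqrt h1le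
  rw [Real.sqrt_one] at hsq
  have hde : dE x y = Real.sqrt ((x.1 - y.1)^2 + (x.2 - y.2)^2) := rfl
  rw [hde] at hlt
  linarith

lemma neighbor_char {p q : ℕ} {x y : Pt} (hx : x ∈ LF p q) (hy : y ∈ LF p q)
    (h : dE x y = 1) : ∃ d ∈ Dirs6, y = x + d := by
  obtain ⟨m1, m2, h1, h2, hQ⟩ := quad_form hx hy
  have h' : Real.sqrt ((x.1 - y.1)^2 + (x.2 - y.2)^2) = 1 := h
  have hQ1 : (x.1 - y.1)^2 + (x.2 - y.2)^2 = 1 := Real.sqrt_eq_one.mp h'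
  have hN : m1^2 + m1*m2 + m2^2 = 1 := by exact_mod_cast hQ.symm.trans hQ1
  have hb2 : m2^2 ≤ 1 := by nlinarith [sq_nonneg (2*m1 + m2)]
  have hb1 : m1^2 ≤ 1 := by nlinarith [sq_nonneg (m1 + 2*m2)]
  have hm2a : -1 ≤ m2 := by nlinarith [sq_nonneg (m2+1)]
  have hm2b : m2 ≤ 1 := by nlinarith [sq_nonneg (m2-1)]
  have hm1a : -1 ≤ m1 := by nlinarith [sq_nonneg (m1+1)]
  have hm1b : m1 ≤ 1 := by nlinarith [sq_nonneg (m1-1)]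
  interval_cases m1 <;> interval_cases m2 <;> push_cast at h1 h2 <;> norm_num at h1 h2 hN <;>
    first
    | (refine ⟨-t1, by simp [Dirs6], Prod.ext_iff.mpr ⟨?_, ?_⟩⟩
       · have e : (x + -t1).1 = x.1 + -(1:ℝ) := rfl
         rw [e]; linarith
       · have e : (x + -t1).2 = x.2 + -(0:ℝ) := rfl
         rw [e]; linarith)
    | (refine ⟨t2 - t1, by simp [Dirs6], Prod.ext_iff.mpr ⟨?_, ?_⟩⟩
       · have e : (x + (t2 - t1)).1 = x.1 + (1/2 - 1 : ℝ) := rfl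
         rw [e]; linarith
       · have e : (x + (t2 - t1)).2 = x.2 + (Real.sqrt 3 / 2 - 0) := rfl
         rw [e]; linarith)
    | (refine ⟨-t2, by simp [Dirs6], Prod.ext_iff.mpr ⟨?_, ?_⟩⟩
       · have e : (x + -t2).1 = x.1 + -(1/2:ℝ) := rfl
         rw [e]; linarith
       · have e : (x + -t2).2 = x.2 + -(Real.sqrt 3 / 2) := rfl
         rw [e]; linarith)
    | (refine ⟨t2, by simp [Dirs6], Prod.ext_iff.mpr ⟨?_, ?_⟩⟩
       · have e : (x + t2).1 = x.1 + (1/2:ℝ) := rfl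
         rw [e]; linarith
       · have e : (x + t2).2 = x.2 + Real.sqrt 3 / 2 := rfl
         rw [e]; linarith)
    | (refine ⟨t1 - t2, by simp [Dirs6], Prod.ext_iff.mpr ⟨?_, ?_⟩⟩
       · have e : (x + (t1 - t2)).1 = x.1 + (1 - 1/2 : ℝ) := rfl
         rw [e]; linarith
       · have e : (x + (t1 - t2)).2 = x.2 + (0 - Real.sqrt 3 / 2) := rfl
         rw [e]; linarith)
    | (refine ⟨t1, by simp [Dirs6], Prod.ext_iff.mpr ⟨?_, ?_⟩⟩
       · have e : (x + t1).1 = x.1 + (1:ℝ) := rfl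
         rw [e]; linarith
       · have e : (x + t1).2 = x.2 + (0:ℝ) := rfl
         rw [e]; linarith)

lemma dE_dir {x : Pt} {d : Pt} (hd : d ∈ Dirs6) : dE x (x + d) = 1 := by
  have key : ∀ u v : ℝ, d = (u, v) → (x.1 - (x + d).1)^2 + (x.2 - (x + d).2)^2 = u^2 + v^2 := by
    rintro u v rfl
    have e1 : (x + (u, v)).1 = x.1 + u := rfl
    have e2 : (x + (u, v)).2 = x.2 + v := rfl
    rw [e1, e2]; ring
  have hde : dE x (x + d) = Real.sqrt ((x.1 - (x + d).1)^2 + (x.2 - (x + d).2)^2) := rfl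
  rw [hde]
  simp only [Dirs6, Finset.mem_insert, Finset.mem_singleton] at hd
  rcases hd with rfl | rfl | rfl | rfl | rfl | rfl
  · rw [key 1 0 rfl, Real.sqrt_eq_one]; norm_num
  · rw [key (-1) (-0) rfl, Real.sqrt_eq_one]; norm_num
  · rw [key (1/2) (Real.sqrt 3 / 2) rfl, Real.sqrt_eq_one]
    linear_combination (1/4 : ℝ) * sq_sqrt3
  · rw [key (-(1/2)) (-(Real.sqrt 3 / 2)) rfl, Real.sqrt_eq_one]
    linear_combination (1/4 : ℝ) * sq_sqrt3
  · rw [key (1/2 - 1) (Real.sqrt 3 / 2 - 0) rfl, Real.sqrt_eq_one]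
    linear_combination (1/4 : ℝ) * sq_sqrt3
  · rw [key (1 - 1/2) (0 - Real.sqrt 3 / 2) rfl, Real.sqrt_eq_one]
    linear_combination (1/4 : ℝ) * sq_sqrt3

lemma nbhd_eq {p q : ℕ} {D : Finset Pt} (hD : ↑D ⊆ LF p q) {x : Pt} (hx : x ∈ D) :
    (D.filter fun y => dE x y = 1) = (Dirs6.filter fun d => x + d ∈ D).image (x + ·) := by
  ext y
  simp only [Finset.mem_filter, Finset.mem_image]
  constructor
  · rintro ⟨hyD, hdy⟩
    obtain ⟨d, hd, rfl⟩ := neighbor_char (hD hx) (hD hyD) hdy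
    exact ⟨d, ⟨hd, hyD⟩, rfl⟩
  · rintro ⟨d, ⟨hd1, hd2⟩, rfl⟩
    exact ⟨hd2, dE_dir hd1⟩

lemma deg_card {p q : ℕ} {D : Finset Pt} (hD : ↑D ⊆ LF p q) {x : Pt} (hx : x ∈ D) :
    (D.filter fun y => dE x y = 1).card = (Dirs6.filter fun d => x + d ∈ D).card := by
  rw [nbhd_eq hD hx]
  exact Finset.card_image_of_injective _ (fun u v huv => by simpa using huv)

lemma top_spec (D : Finset Pt) {v : Pt} (hv : 0 < v.2) {x : Pt} (hx : x ∈ D) :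
    ∃ z : Pt, z ∈ D ∧ (∃ k : ℕ, z = x + (k:ℝ) • v) ∧ z + v ∉ D := by
  have hne : (D.filter fun y => ∃ k : ℕ, y = x + (k:ℝ) • v).Nonempty :=
    ⟨x, Finset.mem_filter.mpr ⟨hx, ⟨0, by simp⟩⟩⟩
  obtain ⟨z, hz, hmax⟩ := Finset.exists_max_image _ Prod.snd hne
  rw [Finset.mem_filter] at hz
  obtain ⟨hzD, k, hzk⟩ := hz
  refine ⟨z, hzD, ⟨k, hzk⟩, fun hin => ?_⟩
  have hmem : z + v ∈ D.filter fun y => ∃ k : ℕ, y = x + (k:ℝ) • v :=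
    Finset.mem_filter.mpr ⟨hin, ⟨k + 1, by
      rw [hzk]; push_cast; rw [add_smul, one_smul, add_assoc]⟩⟩
  have h1 := hmax _ hmem
  have h2 : (z + v).2 = z.2 + v.2 := rfl
  rw [h2] at h1
  linarith

noncomputable def topOf (D : Finset Pt) (v : Pt) (x : Pt) : Pt :=
  if h : 0 < v.2 ∧ x ∈ D then Classical.choose (top_spec D h.1 h.2) else x

lemma topOf_spec (D : Finset Pt) {v : Pt} (hv : 0 < v.2) {x : Pt} (hx : x ∈ D) :
    topOf D v x ∈ D ∧ (∃ k : ℕ, topOf D v x = x + (k:ℝ) • v) ∧ topOf D v x + v ∉ D := by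
  have h : 0 < v.2 ∧ x ∈ D := ⟨hv, hx⟩
  unfold topOf
  rw [dif_pos h]
  exact Classical.choose_spec (top_spec D h.1 h.2)

lemma topOf_inj (D : Finset Pt) {v : Pt} (hv : 0 < v.2) {x x' : Pt} (hx : x ∈ D) (hx' : x' ∈ D)
    (h2 : x.2 = x'.2) (heq : topOf D v x = topOf D v x') : x = x' := by
  obtain ⟨-, ⟨k, hk⟩, -⟩ := topOf_spec D hv hx
  obtain ⟨-, ⟨k', hk'⟩, -⟩ := topOf_spec D hv hx'
  rw [heq] at hk
  have hxx := hk.symm.trans hk'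
  have hsnd := congrArg Prod.snd hxx
  have e1 : (x + (k:ℝ) • v).2 = x.2 + (k:ℝ) * v.2 := rfl
  have e2 : (x' + (k':ℝ) • v).2 = x'.2 + (k':ℝ) * v.2 := rfl
  rw [e1, e2, h2] at hsnd
  have hkk : (k:ℝ) = (k':ℝ) := mul_right_cancel₀ (ne_of_gt hv) (by linarith)
  rw [← hkk] at hxx
  exact add_right_cancel hxx

lemma bLFS_no_step {p q : ℕ} (hq : 0 < q) (hq1 : q ≠ 1) {x x' : Pt}
    (hx : x ∈ bLFS p q) (hx' : x' ∈ bLFS p q) : x ≠ x' + t1 := by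
  obtain ⟨k, hk⟩ := hx; obtain ⟨k', hk'⟩ := hx'
  intro h
  rw [hk, hk'] at h
  have h1 : (k:ℝ) * q = (k':ℝ) * q + 1 := congrArg Prod.fst h
  have h2 : k * (q:ℤ) = k' * q + 1 := by exact_mod_cast h1
  have hdvd : (q:ℤ) ∣ 1 := ⟨k - k', by linear_combination -h2⟩
  have hle := Int.le_of_dvd one_pos hdvd
  omega

/-- the unit-assignment map -/
noncomputable def Phi (D : Finset Pt) : Pt × ℕ → Pt × Pt
  | (x, 0) => (x, -t2)
  | (x, 1) => (x, t1 - t2)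
  | (x, 2) => (topOf D t2 x, t2)
  | (x, 3) => (topOf D (t2 - t1) x, t2 - t1)
  | (x, 4) => if x + t1 ∈ D then (x + t1, -t2) else (x, t1)
  | (x, _) => if x - t1 ∈ D then (x - t1, t1 - t2) else (x, -t1)

lemma Phi0 (D : Finset Pt) (x : Pt) : Phi D (x, 0) = (x, -t2) := rfl
lemma Phi1 (D : Finset Pt) (x : Pt) : Phi D (x, 1) = (x, t1 - t2) := rfl
lemma Phi2 (D : Finset Pt) (x : Pt) : Phi D (x, 2) = (topOf D t2 x, t2) := rfl
lemma Phi3 (D : Finset Pt) (x : Pt) : Phi D (x, 3) = (topOf D (t2 - t1) x, t2 - t1) := rfl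
lemma Phi4 (D : Finset Pt) (x : Pt) :
    Phi D (x, 4) = if x + t1 ∈ D then (x + t1, -t2) else (x, t1) := rfl
lemma Phi5 (D : Finset Pt) (x : Pt) :
    Phi D (x, 5) = if x - t1 ∈ D then (x - t1, t1 - t2) else (x, -t1) := rfl

lemma coeSum {α : Type*} (s : Finset α) (f : α → ℝ) :
    ((∑ a ∈ s, f a : ℝ) : EReal) = ∑ a ∈ s, ((f a : ℝ) : EReal) := by
  classical
  induction s using Finset.cons_induction with
  | empty => simp
  | cons a s ha ih => rw [Finset.sum_cons, Finset.sum_cons, EReal.coe_add, ih]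

set_option maxHeartbeats 2000000 in
/-- in the dewetting regime, `Δ := min{Δ_strip/6, c_F} > 0` and
`V_n(D_n) ≥ -6 c_F n + Δ #∂D_n` for every configuration. -/
theorem energy_lower_bound
    (cF cS : ℝ) (hcF : 0 < cF) (hcS : 0 < cS)
    (p q : ℕ) (hp : 0 < p) (hq : 0 < q) (hpq : Nat.Coprime p q)
    (hdew : Dewetting cF cS q) :
    0 < min (DeltaStrip cF cS q / 6) cF ∧
      ∀ n : ℕ, ∀ D ∈ Cn p q n,
        (((-6 * cF * (n : ℝ) +
            min (DeltaStrip cF cS q / 6) cF * ((bdry D).card : ℝ)) : ℝ) : EReal) ≤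
          Vn cF cS p q D := by
  have hdew4 : q = 1 → cS < 4 * cF := by
    intro h1
    have h := hdew
    unfold Dewetting at h
    rwa [if_pos h1] at h
  have hdew6 : q ≠ 1 → cS < 6 * cF := by
    intro h1
    have h := hdew
    unfold Dewetting at h
    rwa [if_neg h1] at h
  have hDS4 : q = 1 → DeltaStrip cF cS q = 4 * cF - cS := by
    intro h1; unfold DeltaStrip; rw [if_pos h1]
  have hDS6 : q ≠ 1 → DeltaStrip cF cS q = 6 * cF - cS := by
    intro h1; unfold DeltaStrip; rw [if_neg h1]
  have hΔS : 0 < DeltaStrip cF cS q := by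
    rcases eq_or_ne q 1 with h1 | h1
    · rw [hDS4 h1]; linarith [hdew4 h1]
    · rw [hDS6 h1]; linarith [hdew6 h1]
  have hΔpos : 0 < min (DeltaStrip cF cS q / 6) cF := lt_min (by linarith) hcF
  refine ⟨hΔpos, ?_⟩
  intro n D hD
  obtain ⟨hDL, hcard⟩ := hD
  set Δ : ℝ := min (DeltaStrip cF cS q / 6) cF with hΔdef
  have hΔcF : Δ ≤ cF := min_le_right _ _
  have hΔ6 : Δ ≤ DeltaStrip cF cS q / 6 := min_le_left _ _
  set S : Finset Pt := D.filter (fun x => x ∈ bLFS p q) with hSdef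
  set F : Pt → Finset Pt := fun z => Dirs6.filter (fun d => z + d ∉ D) with hFdef
  set M : ℕ := ∑ x ∈ D, (F x).card with hMdef
  set U : Finset (Pt × Pt) := (D ×ˢ Dirs6).filter (fun e => e.1 + e.2 ∉ D) with hUdef
  set m : ℕ := if q = 1 then 4 else 6 with hm
  have hm6 : m ≤ 6 := by rw [hm]; split_ifs <;> norm_num
  have hq1of : ∀ {j : ℕ}, 4 ≤ j → j < m → q ≠ 1 := by
    intro j h4 hj hq1
    rw [hm, if_pos hq1] at hj
    omega
  have ht2pos : (0:ℝ) < t2.2 := by rw [snd_t2]; linarith [sqrt3_pos]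
  have ht21pos : (0:ℝ) < (t2 - t1).2 := by rw [snd_t2t1]; linarith [sqrt3_pos]
  -- degrees
  have hdeg : ∀ x ∈ D, (D.filter fun y => dE x y = 1).card + (F x).card = 6 := by
    intro x hx
    rw [deg_card hDL hx]
    have h := Finset.card_filter_add_card_filter_not
      (s := Dirs6) (p := fun d => x + d ∈ D)
    rw [Dirs6_card] at h
    exact h
  -- sum of degrees
  have hnat : (∑ x ∈ D, (D.filter fun y => dE x y = 1).card) + M = 6 * n := by
    have e1 : ∑ x ∈ D, ((D.filter fun y => dE x y = 1).card + (F x).card) = D.card * 6 := by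
      rw [Finset.sum_congr rfl hdeg, Finset.sum_const, smul_eq_mul]
    rw [Finset.sum_add_distrib] at e1
    rw [hMdef]
    rw [hcard] at e1
    omega
  -- the boundary is controlled by the missing-direction count
  have hbdry : (bdry D).card ≤ M := by
    have h1 : (bdry D).card = ∑ x ∈ bdry D, 1 := by rw [Finset.card_eq_sum_ones]
    rw [h1]
    calc ∑ x ∈ bdry D, 1 ≤ ∑ x ∈ bdry D, (F x).card := by
          apply Finset.sum_le_sum
          intro x hx
          have hx' : x ∈ D ∧ (D.filter fun y => dE x y = 1).card < 6 := Finset.mem_filter.mp hx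
          have h6 := hdeg x hx'.1
          have := hx'.2
          omega
      _ ≤ M := by
          rw [hMdef]
          exact Finset.sum_le_sum_of_subset (Finset.filter_subset _ _)
  -- U has cardinality M
  have hUcard : U.card = M := by
    have hfib : ∀ e ∈ U, e.1 ∈ D := fun e he =>
      (Finset.mem_product.mp (Finset.mem_filter.mp he).1).1
    rw [Finset.card_eq_sum_card_fiberwise hfib, hMdef]
    refine Finset.sum_congr rfl fun x hx => ?_
    have hset : U.filter (fun e => e.1 = x) = (F x).image (fun d => (x, d)) := by
      ext e
      obtain ⟨a, d⟩ := e
      simp only [hUdef, hFdef, Finset.mem_filter, Finset.mem_product, Finset.mem_image]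
      constructor
      · rintro ⟨⟨⟨haD, hdDir⟩, hnd⟩, hax⟩
        subst hax
        exact ⟨d, ⟨hdDir, hnd⟩, rfl⟩
      · rintro ⟨d', ⟨hd1, hd2⟩, heq⟩
        injection heq with h1 h2
        subst h1
        subst h2
        exact ⟨⟨⟨hx, hd1⟩, hd2⟩, rfl⟩
    rw [hset, Finset.card_image_of_injective _ (fun u v huv => by simpa using huv)]
  -- the injection Phi
  have hmaps : ∀ a ∈ S ×ˢ Finset.range m, Phi D a ∈ U := by
    rintro ⟨x, i⟩ ha
    rw [Finset.mem_product, Finset.mem_range] at ha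
    obtain ⟨hxS, hi⟩ := ha
    rw [hSdef, Finset.mem_filter] at hxS
    obtain ⟨hxD, hxB⟩ := hxS
    have hx2 : x.2 = eS p q := bLFS_snd hxB
    have hUmem : ∀ z d : Pt, z ∈ D → d ∈ Dirs6 → z + d ∉ D → ((z, d) : Pt × Pt) ∈ U := by
      intro z d h1 h2 h3
      rw [hUdef]
      exact Finset.mem_filter.mpr ⟨Finset.mem_product.mpr ⟨h1, h2⟩, h3⟩
    have hlow : ∀ w : Pt, w.2 < eS p q → w ∉ D := fun w hw hmem =>
      absurd (LF_snd_ge (hDL hmem)) (not_le.mpr hw)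
    have hi6 : i < 6 := lt_of_lt_of_le hi hm6
    interval_cases i
    · rw [Phi0]
      refine hUmem _ _ hxD (by simp [Dirs6]) (hlow _ ?_)
      have e : (x + -t2).2 = x.2 + -(Real.sqrt 3 / 2) := rfl
      rw [e, hx2]; linarith [sqrt3_pos]
    · rw [Phi1]
      refine hUmem _ _ hxD (by simp [Dirs6]) (hlow _ ?_)
      have e : (x + (t1 - t2)).2 = x.2 + (0 - Real.sqrt 3 / 2) := rfl
      rw [e, hx2]; linarith [sqrt3_pos]
    · rw [Phi2]
      obtain ⟨hzD, -, hzn⟩ := topOf_spec D ht2pos hxD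
      exact hUmem _ _ hzD (by simp [Dirs6]) hzn
    · rw [Phi3]
      obtain ⟨hzD, -, hzn⟩ := topOf_spec D ht21pos hxD
      exact hUmem _ _ hzD (by simp [Dirs6]) hzn
    · rw [Phi4]
      split_ifs with hside
      · refine hUmem _ _ hside (by simp [Dirs6]) (hlow _ ?_)
        have e : ((x + t1) + -t2).2 = x.2 + 0 + -(Real.sqrt 3 / 2) := rfl
        rw [e, hx2]; linarith [sqrt3_pos]
      · exact hUmem _ _ hxD (by simp [Dirs6]) hside
    · rw [Phi5]
      split_ifs with hside
      · refine hUmem _ _ hside (by simp [Dirs6]) (hlow _ ?_)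
        have e : ((x - t1) + (t1 - t2)).2 = x.2 - 0 + (0 - Real.sqrt 3 / 2) := rfl
        rw [e, hx2]; linarith [sqrt3_pos]
      · refine hUmem _ _ hxD (by simp [Dirs6]) ?_
        intro hmem
        exact hside (by rwa [sub_eq_add_neg])
  have hinj : Set.InjOn (Phi D) ↑(S ×ˢ Finset.range m) := by
    rintro ⟨x, i⟩ ha ⟨x', i'⟩ hb hab
    rw [Finset.mem_coe, Finset.mem_product, Finset.mem_range] at ha hb
    obtain ⟨hxS, hi⟩ := ha
    obtain ⟨hx'S, hi'⟩ := hb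
    rw [hSdef, Finset.mem_filter] at hxS hx'S
    obtain ⟨hxD, hxB⟩ := hxS
    obtain ⟨hx'D, hx'B⟩ := hx'S
    have hx2 : x.2 = eS p q := bLFS_snd hxB
    have hx'2 : x'.2 = eS p q := bLFS_snd hx'B
    have hi6 : i < 6 := lt_of_lt_of_le hi hm6
    have hi'6 : i' < 6 := lt_of_lt_of_le hi' hm6
    interval_cases i <;> interval_cases i' <;>
      simp only [Phi0, Phi1, Phi2, Phi3, Phi4, Phi5] at hab <;>
      (try split_ifs at hab) <;>
      (rw [Prod.mk.injEq] at hab) <;>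
      obtain ⟨hA, hB⟩ := hab <;>
      first
      | exact Prod.ext_iff.mpr ⟨hA, rfl⟩
      | exact Prod.ext_iff.mpr ⟨add_right_cancel hA, rfl⟩
      | exact Prod.ext_iff.mpr ⟨sub_left_inj.mp hA, rfl⟩
      | exact Prod.ext_iff.mpr ⟨topOf_inj D ht2pos hxD hx'D (by rw [hx2, hx'2]) hA, rfl⟩
      | exact Prod.ext_iff.mpr ⟨topOf_inj D ht21pos hxD hx'D (by rw [hx2, hx'2]) hA, rfl⟩
      | exact absurd hA (bLFS_no_step hq (hq1of (by norm_num) hi') hxB hx'B)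
      | exact absurd hA.symm (bLFS_no_step hq (hq1of (by norm_num) hi) hx'B hxB)
      | exact absurd (eq_sub_iff_add_eq.mp hA).symm
          (bLFS_no_step hq (hq1of (by norm_num) hi') hx'B hxB)
      | exact absurd (sub_eq_iff_eq_add.mp hA)
          (bLFS_no_step hq (hq1of (by norm_num) hi) hxB hx'B)
      | exact absurd hB (by
          intro hc
          have hc1 := congrArg Prod.fst hc
          have hc2 := congrArg Prod.snd hc
          simp only [fst_t1, snd_t1, fst_t2, snd_t2, fst_neg_t1, snd_neg_t1, fst_neg_t2,
            snd_neg_t2, fst_t1t2, snd_t1t2, fst_t2t1, snd_t2t1] at hc1 hc2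
          linarith [sqrt3_pos])
  have hcardS : m * S.card ≤ M := by
    have h := Finset.card_le_card_of_injOn (Phi D) hmaps hinj
    rw [Finset.card_product, Finset.card_range, hUcard] at h
    exact (mul_comm m S.card).trans_le h
  -- the energy identity
  have hvF : (∑ e ∈ D.offDiag, vF cF (dE e.1 e.2))
      = (((∑ x ∈ D, -cF * (((D.filter fun y => dE x y = 1).card : ℕ) : ℝ)) : ℝ) : EReal) := by
    have hterm : ∀ e ∈ D.offDiag,
        vF cF (dE e.1 e.2) = (((if dE e.1 e.2 = 1 then -cF else 0 : ℝ)) : EReal) := by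
      intro e he
      rw [Finset.mem_offDiag] at he
      unfold vF
      rw [if_neg (dE_not_lt_one (hDL he.1) (hDL he.2.1) he.2.2)]
      split_ifs with h
      · rfl
      · exact EReal.coe_zero.symm
    rw [Finset.sum_congr rfl hterm, ← coeSum]
    refine congrArg Real.toEReal ?_
    have hsub : D.offDiag ⊆ D ×ˢ D := fun e he =>
      Finset.mem_product.mpr ⟨(Finset.mem_offDiag.mp he).1, (Finset.mem_offDiag.mp he).2.1⟩
    have hzero : ∀ e ∈ D ×ˢ D, e ∉ D.offDiag →
        (if dE e.1 e.2 = 1 then -cF else (0:ℝ)) = 0 := by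
      intro e he hne
      rw [Finset.mem_product] at he
      have heq : e.1 = e.2 := by
        by_contra hne2
        exact hne (Finset.mem_offDiag.mpr ⟨he.1, he.2, hne2⟩)
      rw [if_neg (by rw [heq, dE_self]; norm_num)]
    calc ∑ e ∈ D.offDiag, (if dE e.1 e.2 = 1 then -cF else (0:ℝ))
        = ∑ e ∈ D ×ˢ D, (if dE e.1 e.2 = 1 then -cF else (0:ℝ)) :=
          Finset.sum_subset hsub hzero
      _ = ∑ x ∈ D, ∑ y ∈ D, (if dE x y = 1 then -cF else (0:ℝ)) := by
          rw [Finset.sum_product]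
      _ = ∑ x ∈ D, -cF * (((D.filter fun y => dE x y = 1).card : ℕ) : ℝ) := by
          refine Finset.sum_congr rfl fun x hx => ?_
          rw [← Finset.sum_filter, Finset.sum_const, nsmul_eq_mul]
          ring
  have hv1 : (∑ x ∈ D, v1 cS p q x) = -cS * (S.card : ℝ) := by
    simp only [v1]
    rw [← Finset.sum_filter, ← hSdef, Finset.sum_const, nsmul_eq_mul]
    ring
  have hVn : Vn cF cS p q D
      = ((-cF * (6*(n:ℝ) - (M:ℝ)) - cS * (S.card : ℝ) : ℝ) : EReal) := by
    unfold Vn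
    rw [hvF, hv1, ← EReal.coe_add]
    refine congrArg Real.toEReal ?_
    have hcastsum : (∑ x ∈ D, (((D.filter fun y => dE x y = 1).card : ℕ) : ℝ))
        = 6*(n:ℝ) - (M:ℝ) := by
      have h := congrArg (fun t : ℕ => (t:ℝ)) hnat
      push_cast at h
      linarith
    rw [← Finset.mul_sum, hcastsum]
    ring
  -- conclusion
  rw [hVn, EReal.coe_le_coe_iff]
  have hb : ((bdry D).card : ℝ) ≤ (M:ℝ) := by exact_mod_cast hbdry
  have hkey : ∃ mv : ℝ, cS ≤ (cF - Δ) * mv ∧ mv * (S.card:ℝ) ≤ (M:ℝ) := by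
    rcases eq_or_ne q 1 with h1 | h1
    · refine ⟨4, ?_, ?_⟩
      · rw [hDS4 h1] at hΔ6
        linarith [hdew4 h1]
      · have hm4 : m = 4 := by rw [hm, if_pos h1]
        rw [hm4] at hcardS
        exact_mod_cast hcardS
    · refine ⟨6, ?_, ?_⟩
      · rw [hDS6 h1] at hΔ6
        linarith [hdew6 h1]
      · have hm6' : m = 6 := by rw [hm, if_neg h1]
        rw [hm6'] at hcardS
        exact_mod_cast hcardS
  obtain ⟨mv, hk1, hk2⟩ := hkey
  have hsnn : (0:ℝ) ≤ (S.card:ℝ) := Nat.cast_nonneg _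
  have h5 : cS * (S.card:ℝ) ≤ (cF - Δ) * (M:ℝ) :=
    calc cS * (S.card:ℝ) ≤ ((cF - Δ) * mv) * (S.card:ℝ) :=
          mul_le_mul_of_nonneg_right hk1 hsnn
      _ = (cF - Δ) * (mv * (S.card:ℝ)) := by ring
      _ ≤ (cF - Δ) * (M:ℝ) := mul_le_mul_of_nonneg_left hk2 (by linarith)
  have h6 : Δ * ((bdry D).card : ℝ) ≤ Δ * (M:ℝ) :=
    mul_le_mul_of_nonneg_left hb hΔpos.le
  linarith
end
end
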